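/- arXiv:2602.12632 — 7 statements merged into one kernel-verified Lean document; each statement's English description precedes it below -/
import Mathlib

section
/- For every integer n ≥ 1 and every instance 1 ≥ x_1 ≥ x_2 ≥ … ≥ x_n ≥ 0, the pricing curve with threshold function f(t) = 1 − t has regret at most 1/4; that is, x_1 minus the expected value received by the algorithm (the expectation taken over the i.i.d. uniform arrival times) is at most 1/4. -/
open MeasureTheory

/-- The value received by the pricing-curve algorithm with threshold function `f` on the
instance `x`, when value `x i` arrives at time `t i`: it receives `x i` for the index `i`
with the smallest arrival time among all indices `j` with `x j ≥ f (t j)`, and `0` if no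
index clears the threshold. -/
noncomputable def pricingReceived {n : ℕ} (f : ℝ → ℝ) (x t : Fin n → ℝ) : ℝ :=
  if h : (Finset.univ.filter fun j : Fin n => f (t j) ≤ x j).Nonempty then
    x (Classical.choose (Finset.exists_min_image _ t h))
  else 0

/-- The regret of the pricing curve with threshold function `f` on the instance
`x 0 ≥ x 1 ≥ … ≥ x n`: the top value `x 0` minus the expected received value, where the
arrival times are i.i.d. uniform on `[0,1]`. -/
noncomputable def pricingRegret {n : ℕ} (f : ℝ → ℝ) (x : Fin (n + 1) → ℝ) : ℝ :=
  x 0 - ∫ t in Set.univ.pi (fun _ : Fin (n + 1) => Set.Icc (0 : ℝ) 1), pricingReceived f x t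

namespace PricingCurveAux

/-- The uniform distribution on `[0,1]`. -/
noncomputable def nu : Measure ℝ := volume.restrict (Set.Icc 0 1)

instance : IsProbabilityMeasure nu := ⟨by simp [nu, Real.volume_Icc]⟩

instance : NullSingletonClass nu := by unfold nu; infer_instance

/-- The (measurable) set of arrival-time vectors on which index `i` strictly wins. -/
def winSet {m : ℕ} (x : Fin m → ℝ) (i : Fin m) : Set (Fin m → ℝ) :=
  {t | 1 - x i ≤ t i ∧ ∀ j, j ≠ i → 1 - x j ≤ t j → t i < t j}

lemma measurableSet_winSet {m : ℕ} (x : Fin m → ℝ) (i : Fin m) :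
    MeasurableSet (winSet x i) := by
  have h : winSet x i =
      ((fun t : Fin m → ℝ => t i) ⁻¹' Set.Ici (1 - x i)) ∩
        ⋂ j, ⋂ (_ : j ≠ i),
          (((fun t : Fin m → ℝ => t j) ⁻¹' Set.Iio (1 - x j)) ∪ {t | t i < t j}) := by
    ext t
    simp only [winSet, Set.mem_inter_iff, Set.mem_preimage, Set.mem_Ici, Set.mem_iInter,
      Set.mem_union, Set.mem_Iio, Set.mem_setOf_eq]
    refine and_congr_right fun _ => forall_congr' fun j => forall_congr' fun _ => ?_
    rw [imp_iff_not_or, not_le]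
  rw [h]
  exact ((measurable_pi_apply i) measurableSet_Ici).inter
    (MeasurableSet.iInter fun j => MeasurableSet.iInter fun _ =>
      (((measurable_pi_apply j) measurableSet_Iio).union
        (measurableSet_lt (measurable_pi_apply i) (measurable_pi_apply j))))

/-- A measurable version of the received value. -/
noncomputable def gfun {m : ℕ} (x : Fin m → ℝ) (t : Fin m → ℝ) : ℝ :=
  ∑ i, (winSet x i).indicator (fun _ => x i) t

lemma measurable_gfun {m : ℕ} (x : Fin m → ℝ) : Measurable (gfun x) :=
  Finset.measurable_sum _ fun i _ => measurable_const.indicator (measurableSet_winSet x i)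

lemma received_eq_gfun {m : ℕ} (x t : Fin m → ℝ)
    (hd : ∀ i j : Fin m, i ≠ j → t i ≠ t j) :
    pricingReceived (fun v => 1 - v) x t = gfun x t := by
  unfold pricingReceived
  by_cases h : (Finset.univ.filter fun j : Fin m => (fun v => 1 - v) (t j) ≤ x j).Nonempty
  · rw [dif_pos h]
    obtain ⟨hm, hmin⟩ := Classical.choose_spec (Finset.exists_min_image _ t h)
    set i0 := Classical.choose (Finset.exists_min_image _ t h) with hi0
    rw [Finset.mem_filter] at hm
    have hm2 : 1 - t i0 ≤ x i0 := hm.2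
    have hwin : t ∈ winSet x i0 := by
      refine ⟨by linarith, fun j hj hcl => ?_⟩
      have hjmem : j ∈ Finset.univ.filter fun j : Fin m => (fun v => 1 - v) (t j) ≤ x j := by
        simp only [Finset.mem_filter, Finset.mem_univ, true_and]
        show 1 - t j ≤ x j
        linarith
      exact lt_of_le_of_ne (hmin j hjmem) (hd i0 j (Ne.symm hj))
    rw [gfun, Finset.sum_eq_single i0]
    · rw [Set.indicator_of_mem hwin]
    · intro b _ hb
      rw [Set.indicator_of_notMem]
      intro hbmem
      have h1 : t b < t i0 := hbmem.2 i0 (Ne.symm hb) (by linarith)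
      have hbf : b ∈ Finset.univ.filter fun j : Fin m => (fun v => 1 - v) (t j) ≤ x j := by
        simp only [Finset.mem_filter, Finset.mem_univ, true_and]
        show 1 - t b ≤ x b
        linarith [hbmem.1]
      have h2 := hmin b hbf
      linarith
    · intro habs
      exact absurd (Finset.mem_univ i0) habs
  · rw [dif_neg h]
    symm
    rw [gfun]
    apply Finset.sum_eq_zero
    intro i _
    rw [Set.indicator_of_notMem]
    intro hmem
    refine h ⟨i, ?_⟩
    simp only [Finset.mem_filter, Finset.mem_univ, true_and]
    show 1 - t i ≤ x i
    linarith [hmem.1]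

lemma received_mem_Icc {m : ℕ} (x t : Fin m → ℝ) (h0 : ∀ i, 0 ≤ x i) (h1 : ∀ i, x i ≤ 1) :
    pricingReceived (fun v => 1 - v) x t ∈ Set.Icc (0 : ℝ) 1 := by
  unfold pricingReceived
  split_ifs with h
  · exact ⟨h0 _, h1 _⟩
  · exact ⟨le_refl 0, zero_le_one⟩

lemma tie_null {m : ℕ} (i j : Fin (m + 1)) (hij : i ≠ j) :
    Measure.pi (fun _ : Fin (m + 1) => nu) {t | t i = t j} = 0 := by
  obtain ⟨k, hk⟩ := Fin.exists_succAbove_eq (Ne.symm hij)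
  set e := MeasurableEquiv.piFinSuccAbove (fun _ : Fin (m + 1) => ℝ) i with he
  have hmp : MeasurePreserving e (Measure.pi fun _ : Fin (m + 1) => nu)
      (nu.prod (Measure.pi fun _ : Fin m => nu)) :=
    measurePreserving_piFinSuccAbove (fun _ : Fin (m + 1) => nu) i
  set S : Set (ℝ × (Fin m → ℝ)) := {p | p.1 = p.2 k} with hS
  have hSm : MeasurableSet S :=
    measurableSet_eq_fun measurable_fst ((measurable_pi_apply k).comp measurable_snd)
  have hpre : {t : Fin (m + 1) → ℝ | t i = t j} = e ⁻¹' S := by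
    ext t
    simp only [Set.mem_setOf_eq, Set.mem_preimage, hS]
    have : (e t).1 = t i := rfl
    have h2 : (e t).2 k = t (i.succAbove k) := rfl
    rw [this, h2, hk]
  rw [hpre, hmp.measure_preimage hSm.nullMeasurableSet]
  rw [Measure.prod_apply hSm]
  have : ∀ a : ℝ, (Measure.pi fun _ : Fin m => nu) (Prod.mk a ⁻¹' S) = 0 := by
    intro a
    have hset : Prod.mk a ⁻¹' S = {r : Fin m → ℝ | r k = a} := by
      ext r
      simp only [Set.mem_preimage, Set.mem_setOf_eq, hS, eq_comm]
    rw [hset]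
    exact Measure.pi_hyperplane (fun _ : Fin m => nu) k a
  simp only [this, lintegral_zero]

lemma received_aesm {m : ℕ} (x : Fin (m + 1) → ℝ) :
    AEStronglyMeasurable (pricingReceived (fun v => 1 - v) x)
      (Measure.pi fun _ : Fin (m + 1) => nu) := by
  refine ⟨gfun x, (measurable_gfun x).stronglyMeasurable, ?_⟩
  rw [Filter.EventuallyEq, ae_iff]
  have hsub : {t : Fin (m + 1) → ℝ |
      ¬ pricingReceived (fun v => 1 - v) x t = gfun x t} ⊆
      ⋃ i : Fin (m + 1), ⋃ j : Fin (m + 1), {t | i ≠ j ∧ t i = t j} := by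
    intro t ht
    simp only [Set.mem_setOf_eq] at ht
    by_contra hc
    simp only [Set.mem_iUnion, Set.mem_setOf_eq, not_exists] at hc
    exact ht (received_eq_gfun x t fun i j hij => fun heq => hc i j ⟨hij, heq⟩)
  refine measure_mono_null hsub
    (measure_iUnion_null fun i => measure_iUnion_null fun j => ?_)
  by_cases hij : i = j
  · simp [hij]
  · exact measure_mono_null (fun t ht => ht.2) (tie_null i j hij)

lemma received_integrable {m : ℕ} (x : Fin (m + 1) → ℝ)
    (h0 : ∀ i, 0 ≤ x i) (h1 : ∀ i, x i ≤ 1) :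
    Integrable (pricingReceived (fun v => 1 - v) x)
      (Measure.pi fun _ : Fin (m + 1) => nu) := by
  refine ⟨received_aesm x, ?_⟩
  apply HasFiniteIntegral.of_bounded (C := 1)
  filter_upwards with t
  rw [Real.norm_eq_abs, abs_le]
  obtain ⟨ha, hb⟩ := received_mem_Icc x t h0 h1
  exact ⟨by linarith, hb⟩

lemma pointwise_bound {n : ℕ} (x : Fin (n + 1) → ℝ)
    (hxge : ∀ i, 0 ≤ x i)
    (r : Fin n → ℝ) (s : ℝ)
    (hmin : ∀ j : Fin n, 1 - r j ≤ x j.succ → s ≤ r j)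
    (hwit : s = 1 ∨ ∃ j : Fin n, 1 - r j ≤ x j.succ ∧ r j = s)
    (u : ℝ) :
    (1 - s) + (Set.Ico (1 - x 0) s).indicator (fun _ => x 0 - (1 - s)) u
      ≤ pricingReceived (fun v => 1 - v) x (Fin.insertNth (α := fun _ : Fin (n + 1) => ℝ) 0 u r) := by
  set t := Fin.insertNth (α := fun _ : Fin (n + 1) => ℝ) 0 u r with hts
  have ht0 : t 0 = u := Fin.insertNth_apply_same (α := fun _ : Fin (n + 1) => ℝ) 0 u r
  have htsucc : ∀ j : Fin n, t j.succ = r j := by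
    intro j
    have h := Fin.insertNth_apply_succAbove (α := fun _ : Fin (n + 1) => ℝ) (0 : Fin (n + 1)) u r j
    rwa [Fin.zero_succAbove] at h
  by_cases hmem : u ∈ Set.Ico (1 - x 0) s
  · rw [Set.indicator_of_mem hmem]
    have h0f : (0 : Fin (n + 1)) ∈
        Finset.univ.filter fun j : Fin (n + 1) => (fun v => 1 - v) (t j) ≤ x j := by
      simp only [Finset.mem_filter, Finset.mem_univ, true_and]
      show 1 - t 0 ≤ x 0
      rw [ht0]
      linarith [hmem.1]
    unfold pricingReceived
    split_ifs with h
    · obtain ⟨hm, hmn⟩ := Classical.choose_spec (Finset.exists_min_image _ t h)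
      set i0 := Classical.choose (Finset.exists_min_image _ t h) with hi0
      have hi00 : i0 = 0 := by
        rcases Fin.eq_zero_or_eq_succ i0 with h' | ⟨j, hj⟩
        · exact h'
        · exfalso
          rw [Finset.mem_filter] at hm
          have hm2 : 1 - t i0 ≤ x i0 := hm.2
          rw [hj, htsucc j] at hm2
          have h3 := hmin j hm2
          have h4 := hmn 0 h0f
          rw [hj, htsucc j, ht0] at h4
          linarith [hmem.2]
      rw [hi00]
      linarith
    · exact absurd ⟨0, h0f⟩ h
  · rw [Set.indicator_of_notMem hmem]
    rcases hwit with hs1 | ⟨j0, hj0cl, hj0eq⟩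
    · subst hs1
      unfold pricingReceived
      split_ifs with h
      · simpa using hxge _
      · simp
    · have hj0f : j0.succ ∈
          Finset.univ.filter fun j : Fin (n + 1) => (fun v => 1 - v) (t j) ≤ x j := by
        simp only [Finset.mem_filter, Finset.mem_univ, true_and]
        show 1 - t j0.succ ≤ x j0.succ
        rw [htsucc j0]
        exact hj0cl
      unfold pricingReceived
      split_ifs with h
      · obtain ⟨hm, hmn⟩ := Classical.choose_spec (Finset.exists_min_image _ t h)
        set i0 := Classical.choose (Finset.exists_min_image _ t h) with hi0
        rw [Finset.mem_filter] at hm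
        have hm2 : 1 - t i0 ≤ x i0 := hm.2
        have hle : t i0 ≤ t j0.succ := hmn j0.succ hj0f
        rw [htsucc j0, hj0eq] at hle
        linarith
      · exact absurd ⟨j0.succ, hj0f⟩ h

lemma key_inner {n : ℕ} (x : Fin (n + 1) → ℝ) (hanti : Antitone x)
    (hxle : ∀ i, x i ≤ 1) (hxge : ∀ i, 0 ≤ x i)
    (r : Fin n → ℝ) (hr : ∀ j, r j ∈ Set.Icc (0 : ℝ) 1)
    (hint : Integrable
      (fun u => pricingReceived (fun v => 1 - v) x (Fin.insertNth (α := fun _ : Fin (n + 1) => ℝ) 0 u r)) nu) :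
    x 0 - 1 / 4 ≤
      ∫ u, pricingReceived (fun v => 1 - v) x (Fin.insertNth (α := fun _ : Fin (n + 1) => ℝ) 0 u r) ∂nu := by
  obtain ⟨s, hs0, hs1, hsbd⟩ : ∃ s : ℝ, 1 - x 0 ≤ s ∧ s ≤ 1 ∧ ∀ u : ℝ,
      (1 - s) + (Set.Ico (1 - x 0) s).indicator (fun _ => x 0 - (1 - s)) u
        ≤ pricingReceived (fun v => 1 - v) x (Fin.insertNth (α := fun _ : Fin (n + 1) => ℝ) 0 u r) := by
    by_cases hC : (Finset.univ.filter fun j : Fin n => 1 - r j ≤ x j.succ).Nonempty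
    · obtain ⟨j0, hj0C, hj0eq⟩ := Finset.exists_mem_eq_inf' hC r
      rw [Finset.mem_filter] at hj0C
      refine ⟨(Finset.univ.filter fun j : Fin n => 1 - r j ≤ x j.succ).inf' hC r, ?_, ?_, ?_⟩
      · rw [hj0eq]
        have := hanti (Fin.zero_le j0.succ)
        linarith [hj0C.2]
      · rw [hj0eq]
        exact (hr j0).2
      · intro u
        refine pointwise_bound x hxge r _ ?_ ?_ u
        · intro j hj
          refine Finset.inf'_le r ?_
          simp only [Finset.mem_filter, Finset.mem_univ, true_and]
          exact hj
        · exact Or.inr ⟨j0, hj0C.2, hj0eq.symm⟩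
    · refine ⟨1, by linarith [hxge 0], le_refl 1, ?_⟩
      intro u
      refine pointwise_bound x hxge r 1 ?_ (Or.inl rfl) u
      intro j hj
      exact (hC ⟨j, by simp only [Finset.mem_filter, Finset.mem_univ, true_and]; exact hj⟩).elim
  set φ : ℝ → ℝ :=
    fun u => (1 - s) + (Set.Ico (1 - x 0) s).indicator (fun _ => x 0 - (1 - s)) u with hφ
  have hφint : Integrable φ nu :=
    (integrable_const _).add ((integrable_const _).indicator measurableSet_Ico)
  have hmono : ∫ u, φ u ∂nu ≤
      ∫ u, pricingReceived (fun v => 1 - v) x (Fin.insertNth (α := fun _ : Fin (n + 1) => ℝ) 0 u r) ∂nu :=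
    integral_mono_ae hφint hint (Filter.Eventually.of_forall hsbd)
  have hφval : ∫ u, φ u ∂nu = (1 - s) + (x 0 - (1 - s)) * (s - (1 - x 0)) := by
    rw [hφ, integral_add (integrable_const _) ((integrable_const _).indicator measurableSet_Ico),
      integral_const, integral_indicator_const _ measurableSet_Ico]
    have hIco : nu (Set.Ico (1 - x 0) s) = ENNReal.ofReal (s - (1 - x 0)) := by
      have hsubset : Set.Ico (1 - x 0) s ⊆ Set.Icc (0 : ℝ) 1 := fun u hu =>
        ⟨le_trans (by linarith [hxle 0]) hu.1, le_trans hu.2.le hs1⟩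
      rw [show nu = volume.restrict (Set.Icc 0 1) from rfl,
        Measure.restrict_apply measurableSet_Ico,
        Set.inter_eq_self_of_subset_left hsubset]
      exact Real.volume_Ico
    simp only [measureReal_def]
    rw [hIco, ENNReal.toReal_ofReal (by linarith)]
    simp only [measure_univ, ENNReal.toReal_one, one_smul, smul_eq_mul]
    ring
  have hfinal : x 0 - 1 / 4 ≤ ∫ u, φ u ∂nu := by
    rw [hφval]
    nlinarith [sq_nonneg (x 0 - 1 + s - 1 / 2)]
  linarith

end PricingCurveAux

open PricingCurveAux in
/-- For every instance `1 ≥ x_1 ≥ x_2 ≥ … ≥ x_n ≥ 0` (with `n ≥ 1` values), the pricing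
curve with threshold function `f(t) = 1 - t` has regret at most `1/4`. -/
theorem pricing_curve_one_sub_regret_le_quarter (n : ℕ) (x : Fin (n + 1) → ℝ)
    (hanti : Antitone x) (hx1 : x 0 ≤ 1) (hx0 : 0 ≤ x (Fin.last n)) :
    pricingRegret (fun t => 1 - t) x ≤ 1 / 4 := by
  classical
  have hxle : ∀ i, x i ≤ 1 := fun i => le_trans (hanti (Fin.zero_le i)) hx1
  have hxge : ∀ i, 0 ≤ x i := fun i => le_trans hx0 (hanti (Fin.le_last i))
  set μ := Measure.pi (fun _ : Fin (n + 1) => nu) with hμ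
  set μn := Measure.pi (fun _ : Fin n => nu) with hμn
  have hrestrict : (volume : Measure (Fin (n + 1) → ℝ)).restrict
      (Set.univ.pi fun _ : Fin (n + 1) => Set.Icc (0 : ℝ) 1) = μ := by
    rw [hμ]
    symm
    apply Measure.pi_eq
    intro s hs
    rw [Measure.restrict_apply (MeasurableSet.univ_pi hs), ← Set.pi_inter_distrib, volume_pi_pi]
    exact Finset.prod_congr rfl fun i _ =>
      (Measure.restrict_apply (hs i)).symm
  have hrecint : Integrable (pricingReceived (fun v => 1 - v) x) μ :=
    received_integrable x hxge hxle
  set e := MeasurableEquiv.piFinSuccAbove (fun _ : Fin (n + 1) => ℝ) 0 with he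
  have hmp : MeasurePreserving e μ (nu.prod μn) :=
    measurePreserving_piFinSuccAbove (fun _ : Fin (n + 1) => nu) 0
  set F : ℝ × (Fin n → ℝ) → ℝ :=
    fun p => pricingReceived (fun v => 1 - v) x (Fin.insertNth (α := fun _ : Fin (n + 1) => ℝ) 0 p.1 p.2) with hF
  have hesymm : ∀ p : ℝ × (Fin n → ℝ), e.symm p = Fin.insertNth (α := fun _ : Fin (n + 1) => ℝ) 0 p.1 p.2 :=
    fun p => rfl
  have hFcomp : ∀ t, F (e t) = pricingReceived (fun v => 1 - v) x t := by
    intro t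
    rw [hF]
    show pricingReceived (fun v => 1 - v) x (Fin.insertNth (α := fun _ : Fin (n + 1) => ℝ) 0 (e t).1 (e t).2) = _
    rw [show Fin.insertNth (α := fun _ : Fin (n + 1) => ℝ) 0 (e t).1 (e t).2 = e.symm (e t) from rfl,
      e.symm_apply_apply]
  have hFint : Integrable F (nu.prod μn) := by
    rw [← hmp.integrable_comp_emb e.measurableEmbedding]
    have : F ∘ e = pricingReceived (fun v => 1 - v) x := funext hFcomp
    rw [this]
    exact hrecint
  have hintegral : ∫ t, pricingReceived (fun v => 1 - v) x t ∂μ = ∫ p, F p ∂(nu.prod μn) := by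
    rw [← hmp.integral_comp e.measurableEmbedding F]
    exact integral_congr_ae (Filter.Eventually.of_forall fun t => (hFcomp t).symm)
  have hprod : ∫ p, F p ∂(nu.prod μn) = ∫ r, ∫ u, F (u, r) ∂nu ∂μn :=
    integral_prod_symm F hFint
  have hcube : ∀ᵐ r ∂μn, ∀ j, r j ∈ Set.Icc (0 : ℝ) 1 := by
    rw [ae_iff]
    have hsub : {r : Fin n → ℝ | ¬ ∀ j, r j ∈ Set.Icc (0 : ℝ) 1} ⊆
        ⋃ j : Fin n, Function.eval j ⁻¹' (Set.Icc (0 : ℝ) 1)ᶜ := by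
      intro r hr
      simp only [Set.mem_setOf_eq, not_forall] at hr
      obtain ⟨j, hj⟩ := hr
      exact Set.mem_iUnion.2 ⟨j, hj⟩
    refine measure_mono_null hsub
      (measure_iUnion_null fun j => Measure.pi_eval_preimage_null _ ?_)
    rw [show nu = volume.restrict (Set.Icc 0 1) from rfl,
      Measure.restrict_apply (measurableSet_Icc.compl), Set.compl_inter_self]
    simp
  have hintae : ∀ᵐ r ∂μn, Integrable (fun u => F (u, r)) nu := hFint.prod_left_ae
  have hkey : x 0 - 1 / 4 ≤ ∫ r, ∫ u, F (u, r) ∂nu ∂μn := by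
    have hmargint : Integrable (fun r => ∫ u, F (u, r) ∂nu) μn := hFint.integral_prod_right
    have hconst : ∫ _ : Fin n → ℝ, (x 0 - 1 / 4) ∂μn = x 0 - 1 / 4 := by
      simp [measure_univ]
    rw [← hconst]
    refine integral_mono_ae (integrable_const _) hmargint ?_
    filter_upwards [hcube, hintae] with r hr hi
    exact key_inner x hanti hxle hxge r hr hi
  have : x 0 - 1 / 4 ≤ ∫ t, pricingReceived (fun v => 1 - v) x t ∂μ := by
    rw [hintegral, hprod]; exact hkey
  rw [pricingRegret, hrestrict]
  linarith
end

section
/- For every Lebesgue-measurable threshold function f : [0,1] → [0,1], the supremum, over all integers n ≥ 1 and all instances 1 ≥ x_1 ≥ x_2 ≥ … ≥ x_n ≥ 0, of the regret of the pricing curve with threshold f is at least 1/4. -/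
open MeasureTheory

/-- The unit cube in `Fin k → ℝ`. -/
def PCcube (k : ℕ) : Set (Fin k → ℝ) := Set.univ.pi fun _ => Set.Icc (0 : ℝ) 1

lemma PCcube_vol (k : ℕ) : volume (PCcube k) = 1 := by
  rw [PCcube, volume_pi_pi]
  simp [Real.volume_Icc]

instance PCcube_finite (k : ℕ) : IsFiniteMeasure (volume.restrict (PCcube k)) := by
  constructor
  rw [Measure.restrict_apply_univ, PCcube_vol]
  exact ENNReal.one_lt_top

lemma received_nonneg {n : ℕ} (f : ℝ → ℝ) (x t : Fin n → ℝ) (hx : ∀ i, 0 ≤ x i) :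
    0 ≤ pricingReceived f x t := by
  unfold pricingReceived
  split
  · exact hx _
  · exact le_refl 0

lemma received_le_one {n : ℕ} (f : ℝ → ℝ) (x t : Fin n → ℝ) (hx : ∀ i, x i ≤ 1) :
    pricingReceived f x t ≤ 1 := by
  unfold pricingReceived
  split
  · exact hx _
  · exact zero_le_one

/-- If some non-top index clears the threshold strictly before `t 0`, the algorithm
receives at most `1/2` on the instance `(1, 1/2, …, 1/2)`. -/
lemma received_le_half {n : ℕ} (f : ℝ → ℝ) (t : Fin (n + 1) → ℝ)
    (j : Fin (n + 1)) (hj : j ≠ 0) (hfj : f (t j) ≤ 1 / 2) (hjt : t j < t 0) :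
    pricingReceived f (fun i => if i = 0 then (1 : ℝ) else 1 / 2) t ≤ 1 / 2 := by
  set x : Fin (n + 1) → ℝ := fun i => if i = 0 then (1 : ℝ) else 1 / 2 with hxdef
  have hmem : j ∈ Finset.univ.filter fun j : Fin (n + 1) => f (t j) ≤ x j := by
    simp only [Finset.mem_filter, Finset.mem_univ, true_and, hxdef, if_neg hj]
    exact hfj
  have h : (Finset.univ.filter fun j : Fin (n + 1) => f (t j) ≤ x j).Nonempty := ⟨j, hmem⟩
  unfold pricingReceived
  rw [dif_pos h]
  obtain ⟨hi_mem, hi_min⟩ := Classical.choose_spec (Finset.exists_min_image _ t h)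
  set i := Classical.choose (Finset.exists_min_image _ t h)
  have hine : i ≠ 0 := by
    intro h0
    have := hi_min j hmem
    rw [h0] at this
    exact absurd (lt_of_le_of_lt this hjt) (lt_irrefl _)
  simp [hxdef, if_neg hine]

/-- For the single-value instance `x = (1/2)`, the received value is bounded by the
indicator of `{t | f (t 0) ≤ 1/2}` with value `1/2`. -/
lemma received_single_le (f : ℝ → ℝ) (t : Fin 1 → ℝ) :
    pricingReceived f (fun _ => (1 / 2 : ℝ)) t ≤
      Set.indicator {t : Fin 1 → ℝ | f (t 0) ≤ 1 / 2} (fun _ => (1 / 2 : ℝ)) t := by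
  unfold pricingReceived
  split
  · next h =>
    obtain ⟨j, hj⟩ := h
    have hj0 : j = (0 : Fin 1) := Subsingleton.elim _ _
    rw [Finset.mem_filter] at hj
    have hft : f (t 0) ≤ 1 / 2 := by rw [← hj0]; exact hj.2
    have heq : ({t : Fin 1 → ℝ | f (t 0) ≤ 1 / 2}).indicator (fun _ => (1 / 2 : ℝ)) t = 1 / 2 :=
      Set.indicator_of_mem (show t ∈ {t : Fin 1 → ℝ | f (t 0) ≤ 1 / 2} from hft) _
    rw [heq]
  · exact Set.indicator_nonneg (fun _ _ => by norm_num) t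

/-- For every Lebesgue-measurable threshold function `f : [0,1] → [0,1]`, the supremum
over all instances `1 ≥ x_1 ≥ … ≥ x_n ≥ 0` (with `n ≥ 1` values) of the regret of the
pricing curve with threshold `f` is at least `1/4`. -/
theorem pricing_curve_regret_sup_ge_quarter (f : ℝ → ℝ) (hf : Measurable f)
    (hmap : ∀ t ∈ Set.Icc (0 : ℝ) 1, f t ∈ Set.Icc (0 : ℝ) 1) :
    1 / 4 ≤ sSup {r : ℝ | ∃ (n : ℕ) (x : Fin (n + 1) → ℝ),
      Antitone x ∧ x 0 ≤ 1 ∧ 0 ≤ x (Fin.last n) ∧ r = pricingRegret f x} := by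
  set S := {r : ℝ | ∃ (n : ℕ) (x : Fin (n + 1) → ℝ),
      Antitone x ∧ x 0 ≤ 1 ∧ 0 ≤ x (Fin.last n) ∧ r = pricingRegret f x} with hSdef
  -- S is bounded above by 1
  have hbdd : BddAbove S := by
    refine ⟨1, ?_⟩
    rintro r ⟨n, x, hanti, hx1, hxl, rfl⟩
    have hnn : ∀ i, 0 ≤ x i := fun i => le_trans hxl (hanti (Fin.le_last i))
    have hint : 0 ≤ ∫ t in Set.univ.pi (fun _ : Fin (n + 1) => Set.Icc (0 : ℝ) 1),
        pricingReceived f x t :=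
      integral_nonneg fun t => received_nonneg f x t hnn
    unfold pricingRegret
    linarith
  set A : Set ℝ := {s | f s ≤ 1 / 2} with hAdef
  have hA : MeasurableSet A := measurableSet_le hf measurable_const
  set c : ENNReal := volume (A ∩ Set.Icc 0 (1 / 2)) with hcdef
  have hc_le : c ≤ ENNReal.ofReal (1 / 2) := by
    calc c ≤ volume (Set.Icc (0 : ℝ) (1 / 2)) := measure_mono Set.inter_subset_right
    _ = ENNReal.ofReal (1 / 2) := by rw [Real.volume_Icc]; norm_num
  have hc_ne_top : c ≠ ⊤ := ne_top_of_le_ne_top (by simp) hc_le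
  by_cases hc0 : c = 0
  · -- Case 1: single-value instance (1/2) has regret ≥ 1/4
    set x : Fin 1 → ℝ := fun _ => (1 / 2 : ℝ) with hxdef
    have hxS : pricingRegret f x ∈ S := by
      exact ⟨0, x, fun _ _ _ => le_refl _, by norm_num [hxdef], by norm_num [hxdef], rfl⟩
    refine le_trans ?_ (le_csSup hbdd hxS)
    -- compute a bound on the integral
    set B₁ : Set (Fin 1 → ℝ) := {t | f (t 0) ≤ 1 / 2} with hBdef
    have hB₁ : MeasurableSet B₁ :=
      measurableSet_le (hf.comp (measurable_pi_apply 0)) measurable_const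
    have hintle : (∫ t in PCcube 1, pricingReceived f x t) ≤
        ∫ t in PCcube 1, Set.indicator B₁ (fun _ => (1 / 2 : ℝ)) t := by
      refine integral_mono_of_nonneg ?_ ?_ ?_
      · exact Filter.Eventually.of_forall fun t => received_nonneg f x t fun _ => by norm_num
      · exact (integrable_const _).indicator hB₁
      · exact Filter.Eventually.of_forall fun t => received_single_le f t
    have hind : (∫ t in PCcube 1, Set.indicator B₁ (fun _ => (1 / 2 : ℝ)) t) =
        (volume (B₁ ∩ PCcube 1)).toReal * (1 / 2) := by
      rw [integral_indicator_const _ hB₁, measureReal_restrict_apply hB₁, measureReal_def, smul_eq_mul]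
    have hBset : B₁ ∩ PCcube 1 = Set.univ.pi fun _ : Fin 1 => A ∩ Set.Icc 0 1 := by
      ext t
      simp only [Set.mem_inter_iff, Set.mem_setOf_eq, PCcube, Set.mem_pi, Set.mem_univ,
        true_implies, Fin.forall_fin_one, hAdef]
      tauto
    have hvolB : volume (B₁ ∩ PCcube 1) ≤ ENNReal.ofReal (1 / 2) := by
      rw [hBset, volume_pi_pi, Fin.prod_univ_one]
      have hsub : A ∩ Set.Icc 0 1 ⊆ (A ∩ Set.Icc 0 (1 / 2)) ∪ Set.Icc (1 / 2) 1 := by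
        rintro s ⟨hsA, hs0, hs1⟩
        rcases le_or_gt s (1 / 2) with h | h
        · exact Or.inl ⟨hsA, hs0, h⟩
        · exact Or.inr ⟨le_of_lt h, hs1⟩
      calc volume (A ∩ Set.Icc 0 1) ≤ volume ((A ∩ Set.Icc 0 (1 / 2)) ∪ Set.Icc (1 / 2) 1) :=
            measure_mono hsub
        _ ≤ volume (A ∩ Set.Icc 0 (1 / 2)) + volume (Set.Icc (1 / 2 : ℝ) 1) := measure_union_le _ _
        _ = ENNReal.ofReal (1 / 2) := by
            rw [← hcdef, hc0, zero_add, Real.volume_Icc]; norm_num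
    have hvolBR : (volume (B₁ ∩ PCcube 1)).toReal ≤ 1 / 2 := by
      have := ENNReal.toReal_mono (by simp) hvolB
      rwa [ENNReal.toReal_ofReal (by norm_num)] at this
    have : pricingRegret f x = 1 / 2 - ∫ t in PCcube 1, pricingReceived f x t := by
      unfold pricingRegret; rw [hxdef]; rfl
    rw [this]
    have h2 : (∫ t in PCcube 1, pricingReceived f x t) ≤ 1 / 4 := by
      refine le_trans hintle ?_
      rw [hind]
      nlinarith [hvolBR]
    linarith
  · -- Case 2: c > 0; use instances (1, 1/2, …, 1/2) of growing size
    have hcR_pos : 0 < c.toReal := ENNReal.toReal_pos hc0 hc_ne_top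
    have hcR_le : c.toReal ≤ 1 / 2 := by
      have := ENNReal.toReal_mono (by simp) hc_le
      rwa [ENNReal.toReal_ofReal (by norm_num)] at this
    set cR := c.toReal with hcRdef
    refine le_of_forall_pos_le_add ?_
    intro ε hε
    obtain ⟨n, hn⟩ := exists_pow_lt_of_lt_one (by linarith : (0 : ℝ) < 4 * ε)
      (by linarith : 1 - cR < 1)
    -- the instance
    set x : Fin (n + 1) → ℝ := fun i => if i = 0 then (1 : ℝ) else 1 / 2 with hxdef
    have hanti : Antitone x := by
      intro i j hij
      rw [hxdef]
      by_cases hj : j = 0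
      · have : i = 0 := by rw [hj] at hij; exact Fin.le_zero_iff.mp hij
        simp [this, hj]
      · by_cases hi : i = 0 <;> simp [hi, hj] <;> norm_num
    have hxS : pricingRegret f x ∈ S := by
      refine ⟨n, x, hanti, by norm_num [hxdef], ?_, rfl⟩
      rw [hxdef]
      by_cases h : Fin.last n = 0 <;> simp [h] <;> norm_num
    have hreg : 1 / 4 - ε ≤ pricingRegret f x := by
      set B' : Set (Fin (n + 1) → ℝ) :=
        {t | 1 / 2 < t 0} ∩ {t | ∃ j, j ≠ 0 ∧ f (t j) ≤ 1 / 2 ∧ t j ≤ 1 / 2} with hB'def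
      have hB' : MeasurableSet B' := by
        refine (measurableSet_lt measurable_const (measurable_pi_apply 0)).inter ?_
        rw [Set.setOf_exists]
        refine MeasurableSet.iUnion fun j => ?_
        have : {t : Fin (n + 1) → ℝ | j ≠ 0 ∧ f (t j) ≤ 1 / 2 ∧ t j ≤ 1 / 2} =
            {t : Fin (n + 1) → ℝ | j ≠ 0} ∩
              ({t | f (t j) ≤ 1 / 2} ∩ {t | t j ≤ 1 / 2}) := by
          ext t; simp [Set.mem_setOf_eq, and_assoc]
        rw [this]
        exact (MeasurableSet.const _).inter
          ((measurableSet_le (hf.comp (measurable_pi_apply j)) measurable_const).inter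
            (measurableSet_le (measurable_pi_apply j) measurable_const))
      -- pointwise bound on the received value
      have hpt : ∀ t, pricingReceived f x t ≤
          1 - Set.indicator B' (fun _ => (1 / 2 : ℝ)) t := by
        intro t
        by_cases htB : t ∈ B'
        · obtain ⟨h0, j, hj0, hfj, hjb⟩ := id htB
          rw [Set.indicator_of_mem htB]
          have := received_le_half f t j hj0 hfj (lt_of_le_of_lt hjb h0)
          rw [← hxdef] at this
          linarith
        · rw [Set.indicator_of_notMem htB]
          have := received_le_one f x t (fun i => by rw [hxdef]; dsimp only; split <;> norm_num)
          linarith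
      have hIind : Integrable (Set.indicator B' fun _ => (1 / 2 : ℝ))
          (volume.restrict (PCcube (n + 1))) := (integrable_const _).indicator hB'
      have hintle : (∫ t in PCcube (n + 1), pricingReceived f x t) ≤
          ∫ t in PCcube (n + 1), (1 - Set.indicator B' (fun _ => (1 / 2 : ℝ)) t) := by
        refine integral_mono_of_nonneg ?_ ((integrable_const 1).sub hIind) ?_
        · refine Filter.Eventually.of_forall fun t => received_nonneg f x t fun i => ?_
          rw [hxdef]; dsimp only; split <;> norm_num
        · exact Filter.Eventually.of_forall hpt
      have hsplit : (∫ t in PCcube (n + 1), (1 - Set.indicator B' (fun _ => (1 / 2 : ℝ)) t)) =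
          1 - (volume (B' ∩ PCcube (n + 1))).toReal * (1 / 2) := by
        rw [integral_sub (integrable_const 1) hIind, setIntegral_const,
          integral_indicator_const _ hB', measureReal_restrict_apply hB', measureReal_def,
          measureReal_def, PCcube_vol]
        simp
      -- compute the volume of B' ∩ cube
      set K : Set ℝ := A ∩ Set.Iic (1 / 2) with hKdef
      have hK : MeasurableSet K := hA.inter measurableSet_Iic
      set P : Set (Fin (n + 1) → ℝ) :=
        Set.univ.pi (fun i => if i = 0 then Set.Ioc (1 / 2 : ℝ) 1 else Set.Icc 0 1) with hPdef
      set Q : Set (Fin (n + 1) → ℝ) :=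
        Set.univ.pi (fun i => if i = 0 then Set.Ioc (1 / 2 : ℝ) 1 else Set.Icc 0 1 \ K)
        with hQdef
      have hsetEq : B' ∩ PCcube (n + 1) = P \ Q := by
        ext t
        simp only [hB'def, hPdef, hQdef, PCcube, Set.mem_inter_iff, Set.mem_setOf_eq,
          Set.mem_diff, Set.mem_pi, Set.mem_univ, true_implies]
        constructor
        · rintro ⟨⟨h0, j, hj0, hfj, hjb⟩, hcube⟩
          refine ⟨fun i => ?_, fun hQ => ?_⟩
          · by_cases hi : i = 0
            · subst hi; rw [if_pos rfl]; exact ⟨h0, (hcube 0).2⟩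
            · rw [if_neg hi]; exact hcube i
          · have := hQ j
            rw [if_neg hj0] at this
            exact this.2 ⟨hfj, hjb⟩
        · rintro ⟨hP, hQ⟩
          push_neg at hQ
          obtain ⟨j, hj⟩ := hQ
          have hj0 : j ≠ 0 := by
            intro h; subst h; rw [if_pos rfl] at hj; exact hj (hP 0)
          rw [if_neg hj0] at hj
          have hIcc : t j ∈ Set.Icc (0 : ℝ) 1 := by have := hP j; rwa [if_neg hj0] at this
          have hjK : t j ∈ K := by by_contra hK'; exact hj ⟨hIcc, hK'⟩
          have h0 : t 0 ∈ Set.Ioc (1 / 2 : ℝ) 1 := by have := hP 0; rwa [if_pos rfl] at this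
          refine ⟨⟨h0.1, j, hj0, hjK.1, hjK.2⟩, fun i => ?_⟩
          by_cases hi : i = 0
          · subst hi; exact ⟨by linarith [h0.1], h0.2⟩
          · have := hP i; rwa [if_neg hi] at this
      set q : ENNReal := volume (Set.Icc (0 : ℝ) 1 \ K) with hqdef
      have hqc : q = 1 - c := by
        rw [hqdef, ← Set.diff_inter_self_eq_diff (t := K)]
        rw [measure_diff Set.inter_subset_right (hK.inter measurableSet_Icc).nullMeasurableSet
          (ne_top_of_le_ne_top (by rw [Real.volume_Icc]; simp) (measure_mono
            Set.inter_subset_right))]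
        have hKI : K ∩ Set.Icc (0 : ℝ) 1 = A ∩ Set.Icc 0 (1 / 2) := by
          ext s
          simp only [hKdef, Set.mem_inter_iff, Set.mem_Iic, Set.mem_Icc]
          constructor
          · rintro ⟨⟨hsA, hle⟩, h0, _⟩; exact ⟨hsA, h0, hle⟩
          · rintro ⟨hsA, h0, hle⟩; exact ⟨⟨hsA, hle⟩, h0, by linarith⟩
        rw [hKI, ← hcdef, Real.volume_Icc]
        norm_num
      have hc_le_one : c ≤ 1 :=
        le_trans hc_le (by rw [← ENNReal.ofReal_one]; exact ENNReal.ofReal_le_ofReal (by norm_num))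
      have hqR : q.toReal = 1 - cR := by
        rw [hqc, ENNReal.toReal_sub_of_le hc_le_one ENNReal.one_ne_top, ENNReal.toReal_one]
      have hq_le_one : q ≤ 1 := by rw [hqc]; exact tsub_le_self
      have hvolP : volume P = ENNReal.ofReal (1 / 2) := by
        rw [hPdef, volume_pi_pi]
        rw [Fin.prod_univ_succ]
        simp only [if_pos rfl, Fin.succ_ne_zero, if_neg, reduceIte]
        simp [Real.volume_Ioc, Real.volume_Icc]
        norm_num
        rw [one_div, ENNReal.ofReal_inv_of_pos (by norm_num), ENNReal.ofReal_ofNat]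
      have hvolQ : volume Q = ENNReal.ofReal (1 / 2) * q ^ n := by
        rw [hQdef, volume_pi_pi]
        rw [Fin.prod_univ_succ]
        simp only [if_pos rfl, Fin.succ_ne_zero, if_neg, reduceIte]
        rw [Real.volume_Ioc, Finset.prod_const, Finset.card_univ, Fintype.card_fin, ← hqdef]
        norm_num
      have hQsubP : Q ⊆ P := by
        refine Set.pi_mono fun i _ => ?_
        by_cases hi : i = 0
        · subst hi; rw [if_pos rfl, if_pos rfl]
        · rw [if_neg hi, if_neg hi]; exact Set.diff_subset
      have hQm : MeasurableSet Q := by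
        refine MeasurableSet.univ_pi fun i => ?_
        by_cases hi : i = 0
        · subst hi; rw [if_pos rfl]; exact measurableSet_Ioc
        · rw [if_neg hi]; exact measurableSet_Icc.diff hK
      have hvolQ_ne_top : volume Q ≠ ⊤ := by
        rw [hvolQ]
        exact ENNReal.mul_ne_top ENNReal.ofReal_ne_top
          (ENNReal.pow_ne_top (ne_top_of_le_ne_top ENNReal.one_ne_top hq_le_one))
      have hvolPQ : volume (P \ Q) = volume P - volume Q :=
        measure_diff hQsubP hQm.nullMeasurableSet hvolQ_ne_top
      have hVR : (volume (B' ∩ PCcube (n + 1))).toReal =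
          1 / 2 - 1 / 2 * (1 - cR) ^ n := by
        rw [hsetEq, hvolPQ, ENNReal.toReal_sub_of_le (measure_mono hQsubP)
          (by rw [hvolP]; exact ENNReal.ofReal_ne_top)]
        rw [hvolP, hvolQ, ENNReal.toReal_mul, ENNReal.toReal_pow, hqR,
          ENNReal.toReal_ofReal (by norm_num)]
      -- put everything together
      have hregret : pricingRegret f x =
          1 - ∫ t in PCcube (n + 1), pricingReceived f x t := by
        have hx0 : x 0 = 1 := by simp [hxdef]
        unfold pricingRegret
        rw [hx0]
        rfl
      rw [hregret]
      have h1 : (∫ t in PCcube (n + 1), pricingReceived f x t) ≤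
          1 - (1 / 2 - 1 / 2 * (1 - cR) ^ n) * (1 / 2) := by
        refine le_trans hintle ?_
        rw [hsplit, hVR]
      nlinarith [hn]
    calc (1 : ℝ) / 4 = (1 / 4 - ε) + ε := by ring
      _ ≤ pricingRegret f x + ε := by linarith
      _ ≤ sSup S + ε := by
          have := le_csSup hbdd hxS
          linarith
    done
end

section
/- Let f : [0,1] → [0,1] be continuous and strictly decreasing with f(0) = 1, and for v ∈ [f(1),1] let g(v) = inf{t ∈ [0,1] : v ≥ f(t)}. Let n ≥ 2 and let 1 ≥ x_1 > x_2 > … > x_n = f(1) be pairwise distinct values, and set θ_i = g(x_i) (so θ_n = 1). Then the regret of the best-only pricing curve with threshold f on this instance equals x_1·θ_1 + Σ_{i=2}^{n−1} (x_1 − x_i)·(1/i)·(1 − θ_i)^i − Σ_{i=2}^{n−1} (x_1 − x_i)·Σ_{k=i+1}^{n−1} (1/(k−1) − 1/k)·(1 − θ_k)^k. -/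
open MeasureTheory

/-- The value received by the best-only pricing-curve algorithm with threshold function `f`
on the instance `x`, when value `x i` arrives at time `t i`: it accepts (and receives) the
value `x i` with the smallest arrival time among all indices `i` satisfying both
`x i ≥ f (t i)` and `x i > x j` for every `j` arriving before `i`; it receives `0` if no
index qualifies. -/
noncomputable def bestOnlyReceived {n : ℕ} (f : ℝ → ℝ) (x t : Fin n → ℝ) : ℝ :=
  if h : (Finset.univ.filter fun i : Fin n =>
      f (t i) ≤ x i ∧ ∀ j, t j < t i → x j < x i).Nonempty then
    x (Classical.choose (Finset.exists_min_image _ t h))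
  else 0

open Set

namespace BOAux

/-- The unit cube. -/
def cube (n : ℕ) : Set (Fin n → ℝ) := Set.univ.pi fun _ => Set.Icc (0:ℝ) 1

/-- Index `j` "fires": its arrival time is above its threshold and all smaller
indices arrive later. -/
def Fi {n : ℕ} (τ : Fin n → ℝ) (j : Fin n) : Set (Fin n → ℝ) :=
  {t | τ j ≤ t j ∧ ∀ i, i < j → t j < t i}

/-- Index `j` is accepted: it fires and no larger index fires. -/
def Ac {n : ℕ} (τ : Fin n → ℝ) (j : Fin n) : Set (Fin n → ℝ) :=
  {t | t ∈ cube n ∧ t ∈ Fi τ j ∧ ∀ k, j < k → t ∉ Fi τ k}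

lemma measurableSet_cube (n : ℕ) : MeasurableSet (cube n) :=
  MeasurableSet.univ_pi fun _ => measurableSet_Icc

lemma measurableSet_Fi {n : ℕ} (τ : Fin n → ℝ) (j : Fin n) : MeasurableSet (Fi τ j) := by
  have : Fi τ j = {t : Fin n → ℝ | τ j ≤ t j} ∩ ⋂ i, ⋂ (_ : i < j), {t | t j < t i} := by
    ext t; simp [Fi]
  rw [this]
  exact (measurableSet_le measurable_const (measurable_pi_apply j)).inter
    (MeasurableSet.iInter fun i => MeasurableSet.iInter fun _ =>
      measurableSet_lt (measurable_pi_apply j) (measurable_pi_apply i))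

lemma measurableSet_Ac {n : ℕ} (τ : Fin n → ℝ) (j : Fin n) : MeasurableSet (Ac τ j) := by
  have : Ac τ j = cube n ∩ Fi τ j ∩ ⋂ k, ⋂ (_ : j < k), (Fi τ k)ᶜ := by
    ext t; simp only [Ac, mem_setOf_eq, mem_inter_iff, mem_iInter, mem_compl_iff, and_assoc]
  rw [this]
  exact ((measurableSet_cube n).inter (measurableSet_Fi τ j)).inter
    (MeasurableSet.iInter fun k => MeasurableSet.iInter fun _ => (measurableSet_Fi τ k).compl)

lemma vol_cube (n : ℕ) : volume (cube n) = 1 := by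
  rw [cube, volume_pi_pi]
  simp [Real.volume_Icc]

lemma vol_eq_pair {n : ℕ} (i j : Fin n) (hij : i ≠ j) :
    volume {t : Fin n → ℝ | t i = t j} = 0 := by
  cases n with
  | zero => exact i.elim0
  | succ m =>
    obtain ⟨m', hm'⟩ := Fin.exists_succAbove_eq (Ne.symm hij)
    set e := MeasurableEquiv.piFinSuccAbove (fun _ => ℝ) i with he
    have hT : MeasurableSet {p : ℝ × (Fin m → ℝ) | p.1 = p.2 m'} :=
      measurableSet_eq_fun measurable_fst ((measurable_pi_apply m').comp measurable_snd)
    have hpre : {t : Fin (m+1) → ℝ | t i = t j} = e ⁻¹' {p : ℝ × (Fin m → ℝ) | p.1 = p.2 m'} := by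
      ext t
      simp only [mem_setOf_eq, mem_preimage, he, MeasurableEquiv.piFinSuccAbove_apply]
      simp only [Fin.insertNthEquiv, Equiv.coe_fn_symm_mk]
      rw [show i.removeNth t m' = t (i.succAbove m') from rfl, hm']
    rw [hpre, (volume_preserving_piFinSuccAbove (fun _ : Fin (m+1) => ℝ) i).measure_preimage
      hT.nullMeasurableSet]
    rw [Measure.volume_eq_prod, Measure.prod_apply hT]
    have hz : ∀ a : ℝ, volume (Prod.mk a ⁻¹' {p : ℝ × (Fin m → ℝ) | p.1 = p.2 m'}) = 0 := by
      intro a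
      have h2 : (Prod.mk a ⁻¹' {p : ℝ × (Fin m → ℝ) | p.1 = p.2 m'}) = {u : Fin m → ℝ | u m' = a} := by
        ext u; simp [eq_comm]
      rw [h2, volume_pi]
      exact Measure.pi_hyperplane (fun _ : Fin m => (volume : Measure ℝ)) m' a
    simp_rw [show ∀ (x:ℝ), (Prod.mk x ⁻¹' {p : ℝ × (Fin m → ℝ) | p.1 = p.2 m'}) = {a : Fin m → ℝ | x = a m'} from fun x => rfl] at hz
    simp [hz]


lemma ae_injective (n : ℕ) : ∀ᵐ t : Fin n → ℝ, Function.Injective t := by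
  have h : ∀ i j : Fin n, i ≠ j → ∀ᵐ t : Fin n → ℝ, t i ≠ t j := by
    intro i j hij
    rw [ae_iff]
    convert vol_eq_pair i j hij using 2
    simp
  have h2 : ∀ᵐ t : Fin n → ℝ, ∀ i j : Fin n, i ≠ j → t i ≠ t j := by
    rw [ae_all_iff]
    intro i
    rw [ae_all_iff]
    intro j
    by_cases hij : i = j
    · subst hij; filter_upwards with t h; exact absurd rfl h
    · filter_upwards [h i j hij] with t ht _; exact ht
  filter_upwards [h2] with t ht
  intro i j hij
  by_contra hne
  exact ht i j hne hij

lemma vol_comp_perm {n : ℕ} (σ : Equiv.Perm (Fin n)) (S : Set (Fin n → ℝ))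
    (hS : MeasurableSet S) :
    volume {t : Fin n → ℝ | t ∘ σ ∈ S} = volume S := by
  set e := MeasurableEquiv.piCongrLeft (fun _ : Fin n => ℝ) σ.symm with he
  have hpre : {t : Fin n → ℝ | t ∘ σ ∈ S} = e ⁻¹' S := by
    ext t
    simp only [mem_setOf_eq, mem_preimage, he]
    have : e t = t ∘ σ := by
      funext i
      simp [he, MeasurableEquiv.piCongrLeft, Equiv.piCongrLeft]
    rw [show (MeasurableEquiv.piCongrLeft (fun _ : Fin n => ℝ) σ.symm) t = t ∘ σ from this]
  rw [hpre]
  exact (volume_measurePreserving_piCongrLeft (fun _ : Fin n => ℝ) σ.symm).measure_preimage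
    hS.nullMeasurableSet


lemma card_castSucc_lt (m : ℕ) (j : Fin (m+1)) :
    (Finset.univ.filter (fun i : Fin m => i.castSucc < j)).card = (j:ℕ) := by
  rw [← Fin.card_Iio (b := j)]
  apply Finset.card_bij (fun i _ => i.castSucc)
  · intro i hi; simp only [Finset.mem_filter] at hi; simpa using hi.2
  · intro i _ i' _ h; exact Fin.castSucc_injective _ h
  · intro k hk
    simp only [Finset.mem_Iio] at hk
    have hkl : k ≠ Fin.last m := Fin.ne_last_of_lt hk
    obtain ⟨i, hi⟩ := Fin.exists_castSucc_eq.mpr hkl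
    exact ⟨i, by simp [hi, hk], hi⟩

lemma vol_Fi_cube {n : ℕ} (τ : Fin n → ℝ) (j : Fin n) (h0 : 0 ≤ τ j) (h1 : τ j ≤ 1) :
    volume (cube n ∩ Fi τ j) =
      ENNReal.ofReal ((1 - τ j) ^ ((j:ℕ) + 1) / ((j:ℕ) + 1)) := by
  cases n with
  | zero => exact j.elim0
  | succ m =>
    classical
    set Q : Fin m → ℝ → Set ℝ := fun i a => if i.castSucc < j then Ioc a 1 else Icc 0 1 with hQ
    set T : Set (ℝ × (Fin m → ℝ)) := {p | p.1 ∈ Icc (τ j) 1 ∧ ∀ i, p.2 i ∈ Q i p.1} with hT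
    have hTm : MeasurableSet T := by
      have : T = (Prod.fst ⁻¹' Icc (τ j) 1) ∩ ⋂ i, {p : ℝ × (Fin m → ℝ) | p.2 i ∈ Q i p.1} := by
        ext p; simp [hT, mem_iInter]
      rw [this]
      refine (measurable_fst measurableSet_Icc).inter (MeasurableSet.iInter fun i => ?_)
      have hm2 : Measurable (fun p : ℝ × (Fin m → ℝ) => p.2 i) :=
        (measurable_pi_apply i).comp measurable_snd
      by_cases c : i.castSucc < j
      · have : {p : ℝ × (Fin m → ℝ) | p.2 i ∈ Q i p.1}
            = {p : ℝ × (Fin m → ℝ) | p.1 < p.2 i} ∩ {p | p.2 i ≤ 1} := by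
          ext p; simp [hQ, c, mem_Ioc, and_comm]
        rw [this]
        exact (measurableSet_lt measurable_fst hm2).inter
          (measurableSet_le hm2 measurable_const)
      · have : {p : ℝ × (Fin m → ℝ) | p.2 i ∈ Q i p.1} =
            ((fun p : ℝ × (Fin m → ℝ) => p.2 i) ⁻¹' Icc 0 1) := by
          ext p; simp [hQ, c]
        rw [this]
        exact hm2 measurableSet_Icc
    have hpre : cube (m+1) ∩ Fi τ j
        = (MeasurableEquiv.piFinSuccAbove (fun _ : Fin (m+1) => ℝ) j) ⁻¹' T := by
      ext t
      have happ : ∀ i : Fin m,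
          ((MeasurableEquiv.piFinSuccAbove (fun _ : Fin (m+1) => ℝ) j) t).2 i
            = t (j.succAbove i) := fun i => rfl
      have happ1 : ((MeasurableEquiv.piFinSuccAbove (fun _ : Fin (m+1) => ℝ) j) t).1 = t j := rfl
      simp only [mem_inter_iff, mem_preimage, hT, mem_setOf_eq, happ1, happ, cube, mem_pi,
        mem_univ, forall_true_left, Fi]
      constructor
      · rintro ⟨hc, hf1, hf2⟩
        refine ⟨⟨hf1, (hc j).2⟩, fun i => ?_⟩
        by_cases c : i.castSucc < j
        · have hsa : j.succAbove i = i.castSucc := Fin.succAbove_of_castSucc_lt _ _ c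
          simp only [hQ, if_pos c, mem_Ioc, hsa]
          exact ⟨hf2 _ c, (hc _).2⟩
        · simp only [hQ, if_neg c]
          exact hc _
      · rintro ⟨hj, hrest⟩
        have hcube : ∀ i, t i ∈ Icc (0:ℝ) 1 := by
          intro i
          rcases eq_or_ne i j with rfl | hne
          · exact ⟨le_trans h0 hj.1, hj.2⟩
          · obtain ⟨i', hi'⟩ := Fin.exists_succAbove_eq hne
            have := hrest i'
            by_cases c : i'.castSucc < j
            · simp only [hQ, if_pos c, mem_Ioc, hi'] at this
              exact ⟨le_trans (le_trans h0 hj.1) this.1.le, this.2⟩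
            · simp only [hQ, if_neg c, hi'] at this
              exact this
        refine ⟨hcube, hj.1, fun i hij => ?_⟩
        obtain ⟨i', hi'⟩ := Fin.exists_succAbove_eq (Fin.ne_of_lt hij)
        have hc : i'.castSucc < j := by
          rw [← Fin.succAbove_lt_iff_castSucc_lt j i', hi']; exact hij
        have := hrest i'
        simp only [hQ, if_pos hc, mem_Ioc, hi'] at this
        exact this.1
    rw [hpre, (volume_preserving_piFinSuccAbove (fun _ : Fin (m+1) => ℝ) j).measure_preimage
      hTm.nullMeasurableSet]
    rw [Measure.volume_eq_prod, Measure.prod_apply hTm]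
    have hslice : ∀ a : ℝ, volume (Prod.mk a ⁻¹' T)
        = (Icc (τ j) 1).indicator (fun a => ENNReal.ofReal ((1-a)^(j:ℕ))) a := by
      intro a
      by_cases ha : a ∈ Icc (τ j) 1
      · have hp : Prod.mk a ⁻¹' T = Set.univ.pi (fun i => Q i a) := by
          ext u
          constructor
          · rintro ⟨-, h2⟩ i -; exact h2 i
          · intro h; exact ⟨ha, fun i => h i (mem_univ i)⟩
        rw [hp, volume_pi_pi, indicator_of_mem ha]
        have hvol : ∀ i : Fin m, volume (Q i a)
            = (if i.castSucc < j then ENNReal.ofReal (1-a) else 1) := by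
          intro i
          by_cases c : i.castSucc < j <;> simp [hQ, c, Real.volume_Ioc, Real.volume_Icc]
        simp_rw [hvol]
        rw [Finset.prod_ite, Finset.prod_const, Finset.prod_const, one_pow, mul_one,
          card_castSucc_lt m j, ← ENNReal.ofReal_pow (by linarith [ha.2] : (0:ℝ) ≤ 1 - a)]
      · have hp : Prod.mk a ⁻¹' T = ∅ := by
          ext u
          constructor
          · rintro ⟨h1', -⟩; exact absurd h1' ha
          · intro h; exact h.elim
        rw [hp, indicator_of_notMem ha]; simp
    simp_rw [hslice]
    rw [lintegral_indicator measurableSet_Icc,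
      ← ofReal_integral_eq_lintegral_ofReal (f := fun a : ℝ => (1 - a) ^ (j:ℕ))
        ((continuous_const.sub continuous_id').pow _).integrableOn_Icc
        ((ae_restrict_iff' measurableSet_Icc).2 (ae_of_all _ fun a ha =>
          pow_nonneg (by linarith [ha.2]) _))]
    congr 1
    rw [MeasureTheory.integral_Icc_eq_integral_Ioc, ← intervalIntegral.integral_of_le h1,
      intervalIntegral.integral_comp_sub_left (fun u => u ^ (j:ℕ)) 1]
    simp [integral_pow]



/-- `r` is the strict argmin of the first `j+1` coordinates. -/
def Mst {n : ℕ} (j r : Fin n) : Set (Fin n → ℝ) :=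
  {t | ∀ i, i ≤ j → i ≠ r → t r < t i}

lemma measurableSet_Mst {n : ℕ} (j r : Fin n) : MeasurableSet (Mst j r) := by
  have : Mst j r = ⋂ i, ⋂ (_ : i ≤ j), ⋂ (_ : i ≠ r), {t : Fin n → ℝ | t r < t i} := by
    ext t; simp [Mst]
  rw [this]
  exact MeasurableSet.iInter fun i => MeasurableSet.iInter fun _ => MeasurableSet.iInter fun _ =>
    measurableSet_lt (measurable_pi_apply r) (measurable_pi_apply i)

lemma Ac_subset_cube {n : ℕ} (τ : Fin n → ℝ) (j : Fin n) : Ac τ j ⊆ cube n := fun _ h => h.1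

lemma Ac_subset_Fi {n : ℕ} (τ : Fin n → ℝ) (j : Fin n) : Ac τ j ⊆ Fi τ j := fun _ h => h.2.1

lemma Ac_disjoint {n : ℕ} (τ : Fin n → ℝ) {j k : Fin n} (hjk : j ≠ k) :
    Disjoint (Ac τ j) (Ac τ k) := by
  rcases lt_or_gt_of_ne hjk with h | h
  · exact Set.disjoint_left.2 fun t htj htk => (htj.2.2 k h) htk.2.1
  · exact Set.disjoint_left.2 fun t htj htk => (htk.2.2 j h) htj.2.1

lemma comp_mem_cube_iff {n : ℕ} (σ : Equiv.Perm (Fin n)) (t : Fin n → ℝ) :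
    t ∘ σ ∈ cube n ↔ t ∈ cube n := by
  simp only [cube, mem_pi, mem_univ, forall_true_left, Function.comp_apply]
  exact ⟨fun h i => by simpa using h (σ.symm i), fun h i => h (σ i)⟩

lemma perm_lt_of_fix {n : ℕ} (σ : Equiv.Perm (Fin n)) (k : Fin n)
    (hσ : ∀ i, k ≤ i → σ i = i) : ∀ i, i < k → σ i < k := by
  intro i hi
  by_contra h
  push_neg at h
  have h2 : σ (σ i) = σ i := hσ _ h
  have h3 := σ.injective h2
  rw [h3] at h
  exact absurd h (not_le.mpr hi)

lemma comp_mem_Fi_iff {n : ℕ} (τ : Fin n → ℝ) (σ : Equiv.Perm (Fin n)) (k l : Fin n)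
    (hσ : ∀ i, k ≤ i → σ i = i) (hkl : k ≤ l) (t : Fin n → ℝ) :
    t ∘ σ ∈ Fi τ l ↔ t ∈ Fi τ l := by
  have hsymm : ∀ i, k ≤ i → σ.symm i = i := by
    intro i hi
    have h1 := hσ i hi
    exact (Equiv.symm_apply_eq σ).2 h1.symm
  have hσl : σ l = l := hσ l hkl
  have hlt : ∀ i, i < l → σ i < l := by
    intro i hi
    rcases lt_or_ge i k with h | h
    · exact lt_of_lt_of_le (perm_lt_of_fix σ k hσ i h) hkl
    · rw [hσ i h]; exact hi
  have hlt' : ∀ i, i < l → σ.symm i < l := by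
    intro i hi
    rcases lt_or_ge i k with h | h
    · exact lt_of_lt_of_le (perm_lt_of_fix σ.symm k hsymm i h) hkl
    · rw [hsymm i h]; exact hi
  simp only [Fi, mem_setOf_eq, Function.comp_apply, hσl]
  constructor
  · rintro ⟨h1, h2⟩
    refine ⟨h1, fun i hi => ?_⟩
    have := h2 (σ.symm i) (hlt' i hi)
    rwa [Equiv.apply_symm_apply] at this
  · rintro ⟨h1, h2⟩
    exact ⟨h1, fun i hi => h2 (σ i) (hlt i hi)⟩

lemma comp_mem_Ac_iff {n : ℕ} (τ : Fin n → ℝ) (σ : Equiv.Perm (Fin n)) (k : Fin n)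
    (hσ : ∀ i, k ≤ i → σ i = i) (t : Fin n → ℝ) :
    t ∘ σ ∈ Ac τ k ↔ t ∈ Ac τ k := by
  simp only [Ac, mem_setOf_eq, comp_mem_cube_iff σ t,
    comp_mem_Fi_iff τ σ k k hσ le_rfl t]
  constructor
  · rintro ⟨h1, h2, h3⟩
    exact ⟨h1, h2, fun l hl hF =>
      h3 l hl ((comp_mem_Fi_iff τ σ k l hσ hl.le t).2 hF)⟩
  · rintro ⟨h1, h2, h3⟩
    exact ⟨h1, h2, fun l hl hF =>
      h3 l hl ((comp_mem_Fi_iff τ σ k l hσ hl.le t).1 hF)⟩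

lemma card_le_j {n : ℕ} (j : Fin n) :
    (Finset.univ.filter (fun r : Fin n => r ≤ j)).card = (j:ℕ) + 1 := by
  have : Finset.univ.filter (fun r : Fin n => r ≤ j) = Finset.Iic j := by
    ext r; simp
  rw [this, Fin.card_Iic]

lemma vol_Ac_eq {n : ℕ} (τ : Fin n → ℝ) (hmono : Monotone τ) {j k : Fin n} (hjk : j < k) :
    volume (Ac τ k) = ((j:ℕ) + 1) * volume (Fi τ j ∩ Ac τ k) := by
  classical
  have hstep1 : Fi τ j ∩ Ac τ k = Mst j j ∩ Ac τ k := by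
    ext t
    constructor
    · rintro ⟨hF, hA⟩
      exact ⟨fun i hij hir => hF.2 i (lt_of_le_of_ne hij hir), hA⟩
    · rintro ⟨hM, hA⟩
      have htk : τ k ≤ t k := hA.2.1.1
      have htkj : t k < t j := hA.2.1.2 j hjk
      refine ⟨⟨le_trans (hmono hjk.le) (le_trans htk htkj.le), fun i hij => ?_⟩, hA⟩
      exact hM i hij.le (Fin.ne_of_lt hij)
  have hstep2 : ∀ r : Fin n, r ≤ j →
      volume (Mst j r ∩ Ac τ k) = volume (Mst j j ∩ Ac τ k) := by
    intro r hrj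
    rcases eq_or_ne r j with rfl | hrne
    · rfl
    · set σ : Equiv.Perm (Fin n) := Equiv.swap r j with hσdef
      have hfix : ∀ i, k ≤ i → σ i = i := by
        intro i hi
        apply Equiv.swap_apply_of_ne_of_ne
        · exact ne_of_gt (lt_of_le_of_lt hrj (lt_of_lt_of_le hjk hi))
        · exact ne_of_gt (lt_of_lt_of_le hjk hi)
      have hσj : σ j = r := Equiv.swap_apply_right r j
      have hMiff : ∀ t : Fin n → ℝ, t ∘ σ ∈ Mst j j ↔ t ∈ Mst j r := by
        intro t
        constructor
        · intro h i' hi'j hi'r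
          have hile : σ i' ≤ j ∧ σ i' ≠ j := by
            rcases eq_or_ne i' j with rfl | hne
            · rw [hσdef, Equiv.swap_apply_right]
              exact ⟨hrj, hrne⟩
            · rw [hσdef, Equiv.swap_apply_of_ne_of_ne hi'r hne]
              exact ⟨hi'j, hne⟩
          have h2 := h (σ i') hile.1 hile.2
          simp only [Function.comp_apply, hσj] at h2
          rwa [show σ (σ i') = i' from Equiv.swap_apply_self r j i'] at h2
        · intro h i hij hinej
          simp only [Mst, mem_setOf_eq, Function.comp_apply, hσj]
          rcases eq_or_ne i r with rfl | hir
          · rw [hσdef, Equiv.swap_apply_left]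
            exact h j le_rfl (Ne.symm hrne)
          · rw [hσdef, Equiv.swap_apply_of_ne_of_ne hir hinej]
            exact h i hij hir
      have hset : {t : Fin n → ℝ | t ∘ σ ∈ Mst j j ∩ Ac τ k} = Mst j r ∩ Ac τ k := by
        ext t
        simp only [mem_setOf_eq, mem_inter_iff, comp_mem_Ac_iff τ σ k hfix t, hMiff t]
      calc volume (Mst j r ∩ Ac τ k)
          = volume {t : Fin n → ℝ | t ∘ σ ∈ Mst j j ∩ Ac τ k} := by rw [hset]
        _ = volume (Mst j j ∩ Ac τ k) := vol_comp_perm σ _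
            ((measurableSet_Mst j j).inter (measurableSet_Ac τ k))
  set filt := Finset.univ.filter (fun r : Fin n => r ≤ j) with hfilt
  have hdisj : (↑filt : Set (Fin n)).Pairwise
      (Function.onFun Disjoint (fun r => Mst j r ∩ Ac τ k)) := by
    intro r hr r' hr' hne
    simp only [hfilt, Finset.coe_filter, mem_setOf_eq] at hr hr'
    apply Set.disjoint_left.2
    rintro t ⟨hM, -⟩ ⟨hM', -⟩
    exact absurd (hM' r hr.2 hne) (lt_asymm (hM r' hr'.2 (Ne.symm hne)))
  have hunion : volume (⋃ r ∈ filt, (Mst j r ∩ Ac τ k))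
      = ∑ r ∈ filt, volume (Mst j r ∩ Ac τ k) :=
    measure_biUnion_finset hdisj (fun r _ => (measurableSet_Mst j r).inter (measurableSet_Ac τ k))
  have hnull : volume {t : Fin n → ℝ | ¬ Function.Injective t} = 0 := ae_iff.1 (ae_injective n)
  have hcover : Ac τ k ⊆ (⋃ r ∈ filt, (Mst j r ∩ Ac τ k)) ∪ {t | ¬ Function.Injective t} := by
    intro t ht
    by_cases hinj : Function.Injective t
    · left
      obtain ⟨r, hrmem, hrmin⟩ := Finset.exists_min_image filt t ⟨j, by simp [hfilt]⟩
      have hrj : r ≤ j := by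
        simp only [hfilt, Finset.mem_filter] at hrmem; exact hrmem.2
      refine mem_biUnion hrmem ⟨?_, ht⟩
      intro i hij hir
      have h3 := hrmin i (by simp [hfilt, hij])
      exact lt_of_le_of_ne h3 (fun he => hir (hinj he).symm)
    · right; exact hinj
  have heq : volume (Ac τ k) = ∑ r ∈ filt, volume (Mst j r ∩ Ac τ k) := by
    apply le_antisymm
    · calc volume (Ac τ k)
          ≤ volume ((⋃ r ∈ filt, (Mst j r ∩ Ac τ k)) ∪ {t | ¬ Function.Injective t}) :=
            measure_mono hcover
        _ ≤ volume (⋃ r ∈ filt, (Mst j r ∩ Ac τ k)) + volume {t | ¬ Function.Injective t} :=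
            measure_union_le _ _
        _ = ∑ r ∈ filt, volume (Mst j r ∩ Ac τ k) := by rw [hnull, add_zero, hunion]
    · rw [← hunion]
      exact measure_mono (iUnion₂_subset fun r _ => inter_subset_right)
  rw [heq, Finset.sum_congr rfl (fun r hr => hstep2 r (by
      simp only [hfilt, Finset.mem_filter] at hr; exact hr.2)),
    Finset.sum_const, hfilt, card_le_j, nsmul_eq_mul, hstep1]
  push_cast
  ring

lemma Fi_cube_decomp {n : ℕ} (τ : Fin n → ℝ) (j : Fin n) :
    cube n ∩ Fi τ j = ⋃ k ∈ Finset.univ.filter (fun k : Fin n => j ≤ k), (Fi τ j ∩ Ac τ k) := by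
  classical
  ext t
  constructor
  · rintro ⟨hc, hF⟩
    set K := Finset.univ.filter (fun k : Fin n => t ∈ Fi τ k) with hK
    have hKne : K.Nonempty := ⟨j, by simp [hK, hF]⟩
    set k0 := K.max' hKne with hk0
    have hk0mem : t ∈ Fi τ k0 := by
      have := K.max'_mem hKne
      simp only [hK, Finset.mem_filter] at this
      exact this.2
    have hjk0 : j ≤ k0 := K.le_max' j (by simp [hK, hF])
    refine mem_biUnion (Finset.mem_filter.2 ⟨Finset.mem_univ _, hjk0⟩)
      ⟨hF, hc, hk0mem, fun l hl hlF => ?_⟩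
    exact absurd (K.le_max' l (by simp [hK, hlF])) (not_le.mpr hl)
  · intro ht
    obtain ⟨k, hk, htk⟩ := mem_iUnion₂.1 ht
    exact ⟨htk.2.1, htk.1⟩

lemma vol_finite {n : ℕ} (S : Set (Fin n → ℝ)) (hS : S ⊆ cube n) : volume S ≠ ⊤ := by
  have h1 : volume S ≤ volume (cube n) := measure_mono hS
  rw [vol_cube] at h1
  exact ne_top_of_le_ne_top ENNReal.one_ne_top h1

/-- The main recursion for the acceptance probabilities. -/
lemma recursion_real {n : ℕ} (τ : Fin n → ℝ) (hmono : Monotone τ)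
    (hmem : ∀ j, τ j ∈ Icc (0:ℝ) 1) (j : Fin n) :
    (1 - τ j) ^ ((j:ℕ) + 1)
      = (((j:ℕ) : ℝ) + 1) * (volume (Ac τ j)).toReal
        + ∑ k ∈ Finset.univ.filter (fun k : Fin n => j < k), (volume (Ac τ k)).toReal := by
  classical
  have hfin : ∀ k : Fin n, volume (Ac τ k) ≠ ⊤ :=
    fun k => vol_finite _ (Ac_subset_cube τ k)
  have hfinFA : ∀ k : Fin n, volume (Fi τ j ∩ Ac τ k) ≠ ⊤ :=
    fun k => vol_finite _ (fun t ht => (Ac_subset_cube τ k) ht.2)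
  -- volume of cube ∩ Fi j as a sum
  have hdisj : (↑(Finset.univ.filter (fun k : Fin n => j ≤ k)) : Set (Fin n)).Pairwise
      (Function.onFun Disjoint (fun k => Fi τ j ∩ Ac τ k)) := by
    intro k hk k' hk' hne
    exact Disjoint.mono inter_subset_right inter_subset_right (Ac_disjoint τ hne)
  have hsum : volume (cube n ∩ Fi τ j)
      = ∑ k ∈ Finset.univ.filter (fun k : Fin n => j ≤ k), volume (Fi τ j ∩ Ac τ k) := by
    rw [Fi_cube_decomp τ j]
    exact measure_biUnion_finset hdisj
      (fun k _ => (measurableSet_Fi τ j).inter (measurableSet_Ac τ k))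
  -- split off the `k = j` term
  have hsplit : Finset.univ.filter (fun k : Fin n => j ≤ k)
      = insert j (Finset.univ.filter (fun k : Fin n => j < k)) := by
    ext k
    simp only [Finset.mem_filter, Finset.mem_insert, Finset.mem_univ, true_and]
    constructor
    · intro h; rcases eq_or_lt_of_le h with h' | h'
      · exact Or.inl h'.symm
      · exact Or.inr h'
    · rintro (rfl | h)
      · exact le_rfl
      · exact h.le
  have hjnotmem : j ∉ Finset.univ.filter (fun k : Fin n => j < k) := by simp
  have hFiAj : Fi τ j ∩ Ac τ j = Ac τ j :=
    inter_eq_self_of_subset_right (Ac_subset_Fi τ j)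
  rw [hsplit, Finset.sum_insert hjnotmem, hFiAj] at hsum
  -- pass to real numbers
  have h0 : 0 ≤ τ j := (hmem j).1
  have h1 : τ j ≤ 1 := (hmem j).2
  have hvol := vol_Fi_cube τ j h0 h1
  rw [hvol] at hsum
  have htr := congrArg ENNReal.toReal hsum
  rw [ENNReal.toReal_ofReal (div_nonneg (pow_nonneg (by linarith) _) (by positivity)),
    ENNReal.toReal_add (hfin j)
    (by
      refine (ENNReal.sum_lt_top.2 fun k _ => ?_).ne
      exact lt_top_iff_ne_top.2 (hfinFA k)),
    ENNReal.toReal_sum (fun k _ => hfinFA k)] at htr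
  -- each summand: toReal (vol (Fi j ∩ Ac k)) = toReal (vol (Ac k)) / (j+1)
  have hterm : ∀ k ∈ Finset.univ.filter (fun k : Fin n => j < k),
      (volume (Fi τ j ∩ Ac τ k)).toReal = (volume (Ac τ k)).toReal / (((j:ℕ):ℝ) + 1) := by
    intro k hk
    simp only [Finset.mem_filter] at hk
    have h5 := congrArg ENNReal.toReal (vol_Ac_eq τ hmono hk.2)
    rw [ENNReal.toReal_mul] at h5
    have hj1 : (((j:ℕ) : ENNReal) + 1).toReal = ((j:ℕ):ℝ) + 1 := by
      rw [ENNReal.toReal_add (by simp) (by simp)]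
      simp
    rw [hj1] at h5
    rw [h5]
    field_simp
  rw [Finset.sum_congr rfl hterm, ← Finset.sum_div] at htr
  have hj1pos : (0:ℝ) < ((j:ℕ):ℝ) + 1 := by positivity
  field_simp at htr ⊢
  linarith [htr]

lemma received_eq {n : ℕ} (f : ℝ → ℝ) (y τ : Fin n → ℝ)
    (Hf : ∀ (j : Fin n) (s : ℝ), s ∈ Icc (0:ℝ) 1 → (f s ≤ y j ↔ τ j ≤ s))
    (Hy : ∀ i j : Fin n, y i < y j ↔ j < i)
    (t : Fin n → ℝ) (htc : t ∈ cube n) (htinj : Function.Injective t) :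
    bestOnlyReceived f y t = ∑ j : Fin n, (Ac τ j).indicator (fun _ => y j) t := by
  classical
  have htIcc : ∀ i : Fin n, t i ∈ Icc (0:ℝ) 1 := fun i => htc i (mem_univ i)
  have hmemΦ : ∀ j : Fin n,
      ((f (t j) ≤ y j ∧ ∀ i, t i < t j → y i < y j) ↔ t ∈ Fi τ j) := by
    intro j
    constructor
    · rintro ⟨h1, h2⟩
      refine ⟨(Hf j (t j) (htIcc j)).1 h1, fun i hij => ?_⟩
      rcases lt_trichotomy (t j) (t i) with h | h | h
      · exact h
      · exact absurd (htinj h.symm) (Fin.ne_of_lt hij)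
      · exact absurd ((Hy i j).1 (h2 i h)) (not_lt.mpr hij.le)
    · rintro ⟨h1, h2⟩
      refine ⟨(Hf j (t j) (htIcc j)).2 h1, fun i hij => ?_⟩
      rw [Hy i j]
      rcases lt_trichotomy j i with h | h | h
      · exact h
      · subst h; exact absurd hij (lt_irrefl _)
      · exact absurd (h2 i h) (not_lt.mpr hij.le)
  rw [bestOnlyReceived]
  by_cases h : (Finset.univ.filter fun i : Fin n =>
      f (t i) ≤ y i ∧ ∀ j, t j < t i → y j < y i).Nonempty
  · rw [dif_pos h]
    obtain ⟨hmem, hmin⟩ := Classical.choose_spec (Finset.exists_min_image _ t h)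
    set i0 := Classical.choose (Finset.exists_min_image _ t h) with hi0
    have hFi0 : t ∈ Fi τ i0 := (hmemΦ i0).1 (by simpa using hmem)
    have hAc : t ∈ Ac τ i0 := by
      refine ⟨htc, hFi0, fun k hk hFk => ?_⟩
      have hkΦ : k ∈ Finset.univ.filter fun i : Fin n =>
          f (t i) ≤ y i ∧ ∀ j, t j < t i → y j < y i := by
        simp only [Finset.mem_filter, Finset.mem_univ, true_and]
        exact (hmemΦ k).2 hFk
      have h1 := hmin k hkΦ
      have h2 := hFk.2 i0 hk
      exact absurd h1 (not_le.mpr h2)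
    rw [Finset.sum_eq_single i0]
    · rw [indicator_of_mem hAc]
    · intro j _ hj
      apply indicator_of_notMem
      intro hAj
      rcases lt_or_gt_of_ne hj with hlt | hlt
      · exact (hAj.2.2 i0 hlt) hFi0
      · exact (hAc.2.2 j hlt) hAj.2.1
    · intro hni0; exact absurd (Finset.mem_univ i0) hni0
  · rw [dif_neg h]
    symm
    apply Finset.sum_eq_zero
    intro j _
    apply indicator_of_notMem
    intro hAj
    exact h ⟨j, by
      simp only [Finset.mem_filter, Finset.mem_univ, true_and]
      exact (hmemΦ j).2 hAj.2.1⟩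

lemma integral_received {n : ℕ} (f : ℝ → ℝ) (y τ : Fin n → ℝ)
    (Hf : ∀ (j : Fin n) (s : ℝ), s ∈ Icc (0:ℝ) 1 → (f s ≤ y j ↔ τ j ≤ s))
    (Hy : ∀ i j : Fin n, y i < y j ↔ j < i) :
    (∫ t in cube n, bestOnlyReceived f y t)
      = ∑ j : Fin n, y j * (volume (Ac τ j)).toReal := by
  classical
  haveI : IsFiniteMeasure (volume.restrict (cube n)) := by
    constructor
    rw [Measure.restrict_apply_univ, vol_cube]
    exact ENNReal.one_lt_top
  have hae : (fun t => bestOnlyReceived f y t)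
      =ᵐ[volume.restrict (cube n)]
      (fun t => ∑ j : Fin n, (Ac τ j).indicator (fun _ => y j) t) := by
    have h1 : ∀ᵐ t : Fin n → ℝ ∂(volume.restrict (cube n)), Function.Injective t :=
      ae_restrict_of_ae (ae_injective n)
    have h2 : ∀ᵐ t : Fin n → ℝ ∂(volume.restrict (cube n)), t ∈ cube n :=
      ae_restrict_mem (measurableSet_cube n)
    filter_upwards [h1, h2] with t htinj htc
    exact received_eq f y τ Hf Hy t htc htinj
  rw [integral_congr_ae hae, integral_finset_sum]
  · apply Finset.sum_congr rfl
    intro j _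
    rw [integral_indicator_const (y j) (measurableSet_Ac τ j), smul_eq_mul, mul_comm, measureReal_def,
      Measure.restrict_apply (measurableSet_Ac τ j),
      inter_eq_self_of_subset_left (Ac_subset_cube τ j)]
  · intro j _
    exact (integrable_const (y j)).indicator (measurableSet_Ac τ j)

/-- Closed form for the tail sums of the recursion. -/
lemma alg_T (n : ℕ) (q c : ℕ → ℝ)
    (Hrec : ∀ m, m < n → ((m:ℝ)+1) * q m = c m - ∑ k ∈ Finset.Ico (m+1) n, q k) :
    ∀ d m, 1 ≤ m → n - m = d →
      ∑ k ∈ Finset.Ico m n, q k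
        = ∑ k ∈ Finset.Ico m n, ((m:ℝ)/((k:ℝ)*((k:ℝ)+1))) * c k := by
  intro d
  induction d with
  | zero =>
    intro m h1 hd
    have h2 : n ≤ m := by omega
    rw [Finset.Ico_eq_empty_of_le h2]
    simp
  | succ d ih =>
    intro m h1 hd
    have hmn : m < n := by omega
    have hIH := ih (m+1) (by omega) (by omega)
    push_cast at hIH
    have hm1 : ((m:ℝ)+1) ≠ 0 := by positivity
    have hm0 : ((m:ℝ)) ≠ 0 := by
      have : (1:ℝ) ≤ (m:ℝ) := by exact_mod_cast h1
      linarith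
    have hstep := Hrec m hmn
    rw [hIH] at hstep
    rw [Finset.sum_eq_sum_Ico_succ_bot hmn, Finset.sum_eq_sum_Ico_succ_bot hmn
      (f := fun k => ((m:ℝ)/((k:ℝ)*((k:ℝ)+1))) * c k), hIH]
    have hA : ∑ k ∈ Finset.Ico (m+1) n, (((m:ℝ)+1)/((k:ℝ)*((k:ℝ)+1))) * c k
        = ((m:ℝ)+1) * ∑ k ∈ Finset.Ico (m+1) n, ((1:ℝ)/((k:ℝ)*((k:ℝ)+1))) * c k := by
      rw [Finset.mul_sum]
      apply Finset.sum_congr rfl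
      intro k _
      field_simp
    have hB : ∑ k ∈ Finset.Ico (m+1) n, ((m:ℝ)/((k:ℝ)*((k:ℝ)+1))) * c k
        = ((m:ℝ)) * ∑ k ∈ Finset.Ico (m+1) n, ((1:ℝ)/((k:ℝ)*((k:ℝ)+1))) * c k := by
      rw [Finset.mul_sum]
      apply Finset.sum_congr rfl
      intro k _
      field_simp
    set C := ∑ k ∈ Finset.Ico (m+1) n, ((1:ℝ)/((k:ℝ)*((k:ℝ)+1))) * c k with hC
    rw [hA] at hstep
    have hq : q m = c m / ((m:ℝ)+1) - C := by
      have h3 : ((m:ℝ)+1) * q m = ((m:ℝ)+1) * (c m / ((m:ℝ)+1) - C) := by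
        rw [hstep]
        field_simp
      exact mul_left_cancel₀ hm1 h3
    rw [hq, hA, hB]
    have hcm : ((m:ℝ)/((m:ℝ)*((m:ℝ)+1))) = 1/((m:ℝ)+1) := by
      field_simp
    rw [hcm]
    field_simp
    ring

/-- Closed form for the individual acceptance probabilities. -/
lemma alg_q (n : ℕ) (q c : ℕ → ℝ)
    (Hrec : ∀ m, m < n → ((m:ℝ)+1) * q m = c m - ∑ k ∈ Finset.Ico (m+1) n, q k)
    (m : ℕ) (h1 : 1 ≤ m) (h2 : m < n) :
    q m = (1/((m:ℝ)+1)) * c m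
      - ∑ k ∈ Finset.Ico (m+1) n, ((1:ℝ)/((k:ℝ)*((k:ℝ)+1))) * c k := by
  have hstep := Hrec m h2
  have hT := alg_T n q c Hrec (n - (m+1)) (m+1) (by omega) rfl
  push_cast at hT
  rw [hT] at hstep
  have hm1 : ((m:ℝ)+1) ≠ 0 := by positivity
  have hA : ∑ k ∈ Finset.Ico (m+1) n, (((m:ℝ)+1)/((k:ℝ)*((k:ℝ)+1))) * c k
      = ((m:ℝ)+1) * ∑ k ∈ Finset.Ico (m+1) n, ((1:ℝ)/((k:ℝ)*((k:ℝ)+1))) * c k := by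
    rw [Finset.mul_sum]
    apply Finset.sum_congr rfl
    intro k _
    field_simp
  rw [hA] at hstep
  have h3 : ((m:ℝ)+1) * q m = ((m:ℝ)+1) * ((1/((m:ℝ)+1)) * c m
      - ∑ k ∈ Finset.Ico (m+1) n, ((1:ℝ)/((k:ℝ)*((k:ℝ)+1))) * c k) := by
    rw [hstep]
    field_simp
  exact mul_left_cancel₀ hm1 h3

section Theta

variable {f : ℝ → ℝ}

lemma theta_mem_and_iff (hcont : ContinuousOn f (Set.Icc 0 1))
    (hanti : StrictAntiOn f (Set.Icc 0 1)) {v : ℝ} (hv1 : f 1 ≤ v) :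
    sInf {t ∈ Icc (0:ℝ) 1 | f t ≤ v} ∈ Icc (0:ℝ) 1
    ∧ ∀ s ∈ Icc (0:ℝ) 1, (f s ≤ v ↔ sInf {t ∈ Icc (0:ℝ) 1 | f t ≤ v} ≤ s) := by
  set S := {t ∈ Icc (0:ℝ) 1 | f t ≤ v} with hS
  have h1mem : (1:ℝ) ∈ S := ⟨⟨zero_le_one, le_rfl⟩, hv1⟩
  have hne : S.Nonempty := ⟨1, h1mem⟩
  have hbdd : BddBelow S := ⟨0, fun t ht => ht.1.1⟩
  have hclosed : IsClosed S := by
    have : S = Icc (0:ℝ) 1 ∩ f ⁻¹' (Iic v) := by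
      ext t; simp [hS, mem_preimage]
    rw [this]
    exact hcont.preimage_isClosed_of_isClosed isClosed_Icc isClosed_Iic
  have hmem : sInf S ∈ S := hclosed.csInf_mem hne hbdd
  refine ⟨hmem.1, fun s hs => ⟨fun hfs => csInf_le hbdd ⟨hs, hfs⟩, fun hle => ?_⟩⟩
  calc f s ≤ f (sInf S) := by
        rcases eq_or_lt_of_le hle with h | h
        · rw [h]
        · exact (hanti hmem.1 hs h).le
    _ ≤ v := hmem.2

lemma theta_monotone (hcont : ContinuousOn f (Set.Icc 0 1)) {v w : ℝ}
    (hv1 : f 1 ≤ v) (hvw : v ≤ w) :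
    sInf {t ∈ Icc (0:ℝ) 1 | f t ≤ w} ≤ sInf {t ∈ Icc (0:ℝ) 1 | f t ≤ v} := by
  apply csInf_le_csInf
  · exact ⟨0, fun t ht => ht.1.1⟩
  · exact ⟨1, ⟨zero_le_one, le_rfl⟩, hv1⟩
  · exact fun t ht => ⟨ht.1, le_trans ht.2 hvw⟩

lemma theta_last (hanti : StrictAntiOn f (Set.Icc 0 1)) :
    sInf {t ∈ Icc (0:ℝ) 1 | f t ≤ f 1} = 1 := by
  have : {t ∈ Icc (0:ℝ) 1 | f t ≤ f 1} = {1} := by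
    ext s
    simp only [mem_setOf_eq, mem_singleton_iff]
    constructor
    · rintro ⟨hs, hfs⟩
      by_contra hne
      have hlt : s < 1 := lt_of_le_of_ne hs.2 hne
      exact absurd hfs (not_le.mpr (hanti hs ⟨zero_le_one, le_rfl⟩ hlt))
    · rintro rfl
      exact ⟨⟨zero_le_one, le_rfl⟩, le_rfl⟩
  rw [this, csInf_singleton]

end Theta

end BOAux

open BOAux

/-- The regret of the best-only pricing curve with threshold `f`, continuous and strictly
decreasing with `f 0 = 1`, on an instance `1 ≥ x 1 > x 2 > … > x n = f 1` (1-indexed,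
`n ≥ 2`) equals
`x₁·θ₁ + Σ_{i=2}^{n-1} (x₁-x_i)·(1/i)·(1-θ_i)^i
      - Σ_{i=2}^{n-1} (x₁-x_i)·Σ_{k=i+1}^{n-1} (1/(k-1)-1/k)·(1-θ_k)^k`,
where `θ_i = g (x i)` and `g v = inf {t ∈ [0,1] : v ≥ f t}`. -/
theorem bestOnly_regret_formula (f : ℝ → ℝ)
    (hcont : ContinuousOn f (Set.Icc 0 1)) (hanti : StrictAntiOn f (Set.Icc 0 1))
    (hf0 : f 0 = 1) (hmap : ∀ t ∈ Set.Icc (0 : ℝ) 1, f t ∈ Set.Icc (0 : ℝ) 1)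
    (n : ℕ) (hn : 2 ≤ n) (x : ℕ → ℝ) (hx1 : x 1 ≤ 1)
    (hxanti : StrictAntiOn x (Set.Icc 1 n)) (hxn : x n = f 1)
    (g : ℝ → ℝ) (hg : ∀ v, g v = sInf {t ∈ Set.Icc (0 : ℝ) 1 | f t ≤ v})
    (θ : ℕ → ℝ) (hθ : ∀ i, θ i = g (x i)) :
    x 1 - (∫ t in Set.univ.pi (fun _ : Fin n => Set.Icc (0 : ℝ) 1),
        bestOnlyReceived f (fun j : Fin n => x ((j : ℕ) + 1)) t)
      = x 1 * θ 1
        + (∑ i ∈ Finset.Icc 2 (n - 1), (x 1 - x i) * (1 / (i : ℝ)) * (1 - θ i) ^ i)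
        - ∑ i ∈ Finset.Icc 2 (n - 1), (x 1 - x i) *
            ∑ k ∈ Finset.Icc (i + 1) (n - 1),
              (1 / ((k : ℝ) - 1) - 1 / (k : ℝ)) * (1 - θ k) ^ k := by
  classical
  set y : Fin n → ℝ := fun j : Fin n => x ((j : ℕ) + 1) with hydef
  set τ : Fin n → ℝ := fun j : Fin n => θ ((j : ℕ) + 1) with hτdef
  -- basic monotonicity facts about `x`
  have hxanti' : ∀ a b : ℕ, 1 ≤ a → a ≤ b → b ≤ n → x b ≤ x a := by
    intro a b h1 h2 h3
    rcases eq_or_lt_of_le h2 with rfl | h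
    · exact le_rfl
    · exact (hxanti ⟨h1, by omega⟩ ⟨by omega, h3⟩ h).le
  have Hy : ∀ i j : Fin n, y i < y j ↔ j < i := by
    intro i j
    constructor
    · intro hlt
      by_contra hc
      push_neg at hc
      have : (i:ℕ) + 1 ≤ (j:ℕ) + 1 := by
        have : (i:ℕ) ≤ (j:ℕ) := hc
        omega
      exact absurd hlt (not_lt.mpr (hxanti' ((i:ℕ)+1) ((j:ℕ)+1) (by omega) this
        (by have := j.isLt; omega)))
    · intro hlt
      have hji : (j:ℕ) + 1 < (i:ℕ) + 1 := by
        have : (j:ℕ) < (i:ℕ) := hlt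
        omega
      exact hxanti ⟨by omega, by have := j.isLt; omega⟩ ⟨by omega, by have := i.isLt; omega⟩ hji
  have hf1y : ∀ j : Fin n, f 1 ≤ y j := by
    intro j
    rw [← hxn, hydef]
    exact hxanti' ((j:ℕ)+1) n (by omega) (by have := j.isLt; omega) le_rfl
  have hθeq : ∀ j : Fin n, τ j = sInf {t ∈ Set.Icc (0:ℝ) 1 | f t ≤ y j} := by
    intro j
    rw [hτdef, hydef]
    simp only
    rw [hθ, hg]
  have Hf : ∀ (j : Fin n) (s : ℝ), s ∈ Set.Icc (0:ℝ) 1 → (f s ≤ y j ↔ τ j ≤ s) := by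
    intro j s hs
    rw [hθeq j]
    exact (theta_mem_and_iff hcont hanti (hf1y j)).2 s hs
  have hmemτ : ∀ j : Fin n, τ j ∈ Set.Icc (0:ℝ) 1 := by
    intro j
    rw [hθeq j]
    exact (theta_mem_and_iff hcont hanti (hf1y j)).1
  have hmono : Monotone τ := by
    intro i j hij
    rw [hθeq i, hθeq j]
    apply theta_monotone hcont (hf1y j)
    rcases eq_or_lt_of_le hij with rfl | h
    · exact le_rfl
    · exact ((Hy j i).2 h).le
  -- the integral
  have hcube_eq : Set.univ.pi (fun _ : Fin n => Set.Icc (0:ℝ) 1) = cube n := rfl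
  rw [hcube_eq, integral_received f y τ Hf Hy]
  -- pass to ℕ-indexed quantities
  set q : ℕ → ℝ := fun m => if h : m < n then (volume (Ac τ ⟨m, h⟩)).toReal else 0 with hqdef
  set c : ℕ → ℝ := fun m => (1 - θ (m+1)) ^ (m+1) with hcdef
  have hqval : ∀ j : Fin n, q (j:ℕ) = (volume (Ac τ j)).toReal := by
    intro j
    rw [hqdef]
    simp only
    rw [dif_pos j.isLt]
  have Hrec : ∀ m, m < n → ((m:ℝ)+1) * q m = c m - ∑ k ∈ Finset.Ico (m+1) n, q k := by
    intro m hm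
    have hrr := recursion_real τ hmono hmemτ ⟨m, hm⟩
    have hτm : τ ⟨m, hm⟩ = θ (m+1) := rfl
    have hsum : ∑ k ∈ Finset.univ.filter (fun k : Fin n => (⟨m, hm⟩ : Fin n) < k),
        (volume (Ac τ k)).toReal = ∑ k ∈ Finset.Ico (m+1) n, q k := by
      rw [Finset.sum_filter]
      have hterm : ∀ k : Fin n,
          (if (⟨m, hm⟩ : Fin n) < k then (volume (Ac τ k)).toReal else 0)
            = (fun m' : ℕ => if m < m' then q m' else 0) (k:ℕ) := by
        intro k
        simp only
        by_cases hc : m < (k:ℕ)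
        · rw [if_pos hc, if_pos (show (⟨m, hm⟩ : Fin n) < k from hc), hqval k]
        · rw [if_neg hc, if_neg (show ¬ (⟨m, hm⟩ : Fin n) < k from hc)]
      rw [Finset.sum_congr rfl (fun k _ => hterm k),
        Fin.sum_univ_eq_sum_range (fun m' : ℕ => if m < m' then q m' else 0) n,
        ← Finset.sum_filter]
      congr 1
      ext a
      simp only [Finset.mem_filter, Finset.mem_range, Finset.mem_Ico]
      omega
    rw [hsum] at hrr
    have hqm : q m = (volume (Ac τ (⟨m, hm⟩ : Fin n))).toReal := hqval ⟨m, hm⟩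
    rw [hτm] at hrr
    rw [hqm, hcdef]
    simp only
    linarith [hrr]
  have hE : ∑ j : Fin n, y j * (volume (Ac τ j)).toReal
      = ∑ m ∈ Finset.range n, x (m+1) * q m := by
    have hterm : ∀ j : Fin n, y j * (volume (Ac τ j)).toReal
        = (fun m : ℕ => x (m+1) * q m) (j:ℕ) := by
      intro j
      simp only
      rw [hqval j, hydef]
    rw [Finset.sum_congr rfl (fun j _ => hterm j),
      Fin.sum_univ_eq_sum_range (fun m : ℕ => x (m+1) * q m) n]
  rw [hE]
  -- θ n = 1 and q (n-1) = 0
  have hθn : θ n = 1 := by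
    rw [hθ, hxn, hg]
    exact theta_last hanti
  have hclast : c (n-1) = 0 := by
    rw [hcdef]
    simp only
    rw [show n - 1 + 1 = n by omega, hθn, sub_self]
    exact zero_pow (by omega)
  have hqlast : q (n-1) = 0 := by
    have h := Hrec (n-1) (by omega)
    rw [show n - 1 + 1 = n by omega, Finset.Ico_self, Finset.sum_empty, hclast] at h
    have h2 : ((n-1:ℕ):ℝ) + 1 ≠ 0 := by positivity
    have h3 : (((n-1:ℕ):ℝ)+1) * q (n-1) = 0 := by linarith [h]
    rcases mul_eq_zero.mp h3 with h' | h'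
    · exact absurd h' h2
    · exact h'
  -- split off the first term of the expectation
  have hq0 : q 0 = (1 - θ 1) - ∑ k ∈ Finset.Ico 1 n, q k := by
    have h := Hrec 0 (by omega)
    rw [hcdef] at h
    simp only at h
    norm_num at h
    linarith [h]
  have hA : ∑ m ∈ Finset.range n, x (m+1) * q m
      = x 1 * q 0 + ∑ k ∈ Finset.Ico 1 n, x (k+1) * q k := by
    rw [Finset.range_eq_Ico, Finset.sum_eq_sum_Ico_succ_bot (by omega : 0 < n)]
  have hstep3 : x 1 - ∑ m ∈ Finset.range n, x (m+1) * q m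
      = x 1 * θ 1 + ∑ k ∈ Finset.Ico 1 n, (x 1 - x (k+1)) * q k := by
    have hsplit : ∑ k ∈ Finset.Ico 1 n, (x 1 - x (k+1)) * q k
        = x 1 * ∑ k ∈ Finset.Ico 1 n, q k - ∑ k ∈ Finset.Ico 1 n, x (k+1) * q k := by
      rw [Finset.mul_sum, ← Finset.sum_sub_distrib]
      apply Finset.sum_congr rfl
      intro k _
      ring
    rw [hA, hsplit, hq0]
    ring
  rw [hstep3]
  -- drop the last (vanishing) term
  have hsum14 : ∑ k ∈ Finset.Ico 1 n, (x 1 - x (k+1)) * q k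
      = ∑ k ∈ Finset.Ico 1 (n-1), (x 1 - x (k+1)) * q k := by
    have h : ∑ k ∈ Finset.Ico 1 ((n-1)+1), (x 1 - x (k+1)) * q k
        = ∑ k ∈ Finset.Ico 1 (n-1), (x 1 - x (k+1)) * q k + (x 1 - x ((n-1)+1)) * q (n-1) :=
      Finset.sum_Ico_succ_top (by omega : 1 ≤ n - 1) _
    rw [show (n-1)+1 = n by omega] at h
    rw [h, hqlast, mul_zero, add_zero]
  rw [hsum14]
  -- closed form for each remaining term
  have hterm_eq : ∀ k ∈ Finset.Ico 1 (n-1), (x 1 - x (k+1)) * q k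
      = (x 1 - x (k+1)) * ((1/((k+1:ℕ):ℝ)) * (1 - θ (k+1)) ^ (k+1)
        - ∑ k' ∈ Finset.Icc (k+2) (n-1),
            (1/((k':ℝ)-1) - 1/(k':ℝ)) * (1 - θ k') ^ k') := by
    intro k hk
    simp only [Finset.mem_Ico] at hk
    have hq := alg_q n q c Hrec k hk.1 (by omega)
    -- trim the inner sum
    have htrim : ∑ l ∈ Finset.Ico (k+1) n, ((1:ℝ)/((l:ℝ)*((l:ℝ)+1))) * c l
        = ∑ l ∈ Finset.Ico (k+1) (n-1), ((1:ℝ)/((l:ℝ)*((l:ℝ)+1))) * c l := by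
      have h : ∑ l ∈ Finset.Ico (k+1) ((n-1)+1), ((1:ℝ)/((l:ℝ)*((l:ℝ)+1))) * c l
          = ∑ l ∈ Finset.Ico (k+1) (n-1), ((1:ℝ)/((l:ℝ)*((l:ℝ)+1))) * c l
            + ((1:ℝ)/(((n-1:ℕ):ℝ)*(((n-1:ℕ):ℝ)+1))) * c (n-1) :=
        Finset.sum_Ico_succ_top (by omega : k + 1 ≤ n - 1) _
      rw [show (n-1)+1 = n by omega] at h
      rw [h, hclast, mul_zero, add_zero]
    rw [htrim] at hq
    -- reindex the inner sum
    have hinner : ∑ l ∈ Finset.Ico (k+1) (n-1), ((1:ℝ)/((l:ℝ)*((l:ℝ)+1))) * c l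
        = ∑ k' ∈ Finset.Icc (k+2) (n-1), (1/((k':ℝ)-1) - 1/(k':ℝ)) * (1 - θ k') ^ k' := by
      apply Finset.sum_nbij' (i := fun l => l + 1) (j := fun k' => k' - 1)
      · intro l hl
        simp only [Finset.mem_Ico] at hl
        simp only [Finset.mem_Icc]
        omega
      · intro k' hk'
        simp only [Finset.mem_Icc] at hk'
        simp only [Finset.mem_Ico]
        omega
      · intro l hl; omega
      · intro k' hk'
        simp only [Finset.mem_Icc] at hk'
        omega
      · intro l hl
        simp only [Finset.mem_Ico] at hl
        have hl0 : ((l:ℝ)) ≠ 0 := by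
          have : (1:ℝ) ≤ (l:ℝ) := by exact_mod_cast (by omega : 1 ≤ l)
          linarith
        rw [hcdef]
        simp only
        push_cast
        rw [show ((l:ℝ) + 1) - 1 = (l:ℝ) by ring]
        have hl1 : ((l:ℝ)) + 1 ≠ 0 := by positivity
        field_simp
        ring
    rw [hinner] at hq
    rw [hq, hcdef]
    simp only
    push_cast
    ring
  rw [Finset.sum_congr rfl hterm_eq]
  -- reindex the outer sum
  have hout : ∑ k ∈ Finset.Ico 1 (n-1), (x 1 - x (k+1)) * ((1/((k+1:ℕ):ℝ)) * (1 - θ (k+1)) ^ (k+1)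
        - ∑ k' ∈ Finset.Icc (k+2) (n-1), (1/((k':ℝ)-1) - 1/(k':ℝ)) * (1 - θ k') ^ k')
      = ∑ i ∈ Finset.Icc 2 (n-1), (x 1 - x i) * ((1/(i:ℝ)) * (1 - θ i) ^ i
        - ∑ k' ∈ Finset.Icc (i+1) (n-1), (1/((k':ℝ)-1) - 1/(k':ℝ)) * (1 - θ k') ^ k') := by
    apply Finset.sum_nbij' (i := fun k => k + 1) (j := fun i => i - 1)
    · intro l hl
      simp only [Finset.mem_Ico] at hl
      simp only [Finset.mem_Icc]
      omega
    · intro i hi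
      simp only [Finset.mem_Icc] at hi
      simp only [Finset.mem_Ico]
      omega
    · intro l hl; omega
    · intro i hi
      simp only [Finset.mem_Icc] at hi
      omega
    · intro l hl
      simp only [Finset.mem_Ico] at hl
      norm_num
  rw [hout]
  have hfinal : ∑ i ∈ Finset.Icc 2 (n-1), (x 1 - x i) * ((1/(i:ℝ)) * (1 - θ i) ^ i
        - ∑ k' ∈ Finset.Icc (i+1) (n-1), (1/((k':ℝ)-1) - 1/(k':ℝ)) * (1 - θ k') ^ k')
      = (∑ i ∈ Finset.Icc 2 (n-1), (x 1 - x i) * (1 / (i:ℝ)) * (1 - θ i) ^ i)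
        - ∑ i ∈ Finset.Icc 2 (n-1), (x 1 - x i) *
            ∑ k ∈ Finset.Icc (i + 1) (n - 1), (1 / ((k:ℝ) - 1) - 1 / (k:ℝ)) * (1 - θ k) ^ k := by
    rw [← Finset.sum_sub_distrib]
    apply Finset.sum_congr rfl
    intro i _
    ring
  rw [hfinal]
  ring
end

section
/- For every integer j ≥ 1, with k = 400·j², one has Σ_{u=0}^{j−1} binom(4j, u) · binom(2k − 4j, k − u) ≤ (1/4) · binom(2k, k). -/
open Finset

namespace FewHalvesAux

/-- The hypergeometric term. -/
def g (j k u : ℕ) : ℕ := Nat.choose (4 * j) u * Nat.choose (2 * k - 4 * j) (k - u)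

lemma g_symm (j k : ℕ) (hjk : 4 * j ≤ k) {u : ℕ} (hu : u ≤ 4 * j) :
    g j k (4 * j - u) = g j k u := by
  unfold g
  have h1 : (4 * j).choose (4 * j - u) = (4 * j).choose u := Nat.choose_symm hu
  have h2 : k - (4 * j - u) = (2 * k - 4 * j) - (k - u) := by omega
  rw [h1, h2, Nat.choose_symm (by omega)]

lemma g_step (j k : ℕ) (hjk : 4 * j ≤ k) {u : ℕ} (hu : u + 1 ≤ 2 * j) :
    g j k u ≤ g j k (u + 1) := by
  unfold g
  set a := (4 * j).choose u with ha
  set a' := (4 * j).choose (u + 1) with ha'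
  set b := (2 * k - 4 * j).choose (k - u) with hb
  set b' := (2 * k - 4 * j).choose (k - (u + 1)) with hb'
  have h1 : a' * (u + 1) = a * (4 * j - u) := Nat.choose_succ_right_eq _ _
  have hr : k - u = (k - (u + 1)) + 1 := by omega
  have h2 : b * (k - u) = b' * (k - 4 * j + u + 1) := by
    have := Nat.choose_succ_right_eq (2 * k - 4 * j) (k - (u + 1))
    rw [hb, hr, this]
    congr 1
    omega
  have hineq : (u + 1) * (k - 4 * j + u + 1) ≤ (4 * j - u) * (k - u) :=
    Nat.mul_le_mul (by omega) (by omega)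
  have hpos : 0 < (u + 1) * (k - 4 * j + u + 1) := by positivity
  have key : (a * b) * ((u + 1) * (k - 4 * j + u + 1))
      ≤ (a' * b') * ((u + 1) * (k - 4 * j + u + 1)) := by
    calc (a * b) * ((u + 1) * (k - 4 * j + u + 1))
        ≤ (a * b) * ((4 * j - u) * (k - u)) := Nat.mul_le_mul_left _ hineq
      _ = (a * (4 * j - u)) * (b * (k - u)) := by ring
      _ = (a' * (u + 1)) * (b' * (k - 4 * j + u + 1)) := by rw [h1, h2]
      _ = (a' * b') * ((u + 1) * (k - 4 * j + u + 1)) := by ring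
  exact Nat.le_of_mul_le_mul_right key hpos

lemma g_mono (j k : ℕ) (hjk : 4 * j ≤ k) :
    ∀ v, ∀ u, u ≤ v → v ≤ 2 * j → g j k u ≤ g j k v := by
  intro v
  induction v with
  | zero => intro u hu _; interval_cases u; exact le_refl _
  | succ n ih =>
    intro u hu hv
    rcases Nat.lt_or_ge u (n + 1) with h' | h'
    · exact le_trans (ih u (by omega) (by omega)) (g_step j k hjk hv)
    · have : u = n + 1 := by omega
      subst this; exact le_refl _

lemma g_sum (j k : ℕ) (hjk : 4 * j ≤ k) :
    ∑ u ∈ range (4 * j + 1), g j k u = Nat.choose (2 * k) k := by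
  have h : 2 * k = 4 * j + (2 * k - 4 * j) := by omega
  rw [h, Nat.add_choose_eq, Finset.Nat.sum_antidiagonal_eq_sum_range_succ_mk]
  have hR : ∑ i ∈ range (k + 1), (4 * j).choose (i, k - i).1
      * (2 * k - 4 * j).choose (i, k - i).2 = ∑ i ∈ range (k + 1), g j k i := rfl
  rw [hR]
  apply Finset.sum_subset
  · exact Finset.range_subset_range.mpr (by omega)
  · intro x hx hx'
    simp only [Finset.mem_range] at hx hx'
    unfold g
    rw [Nat.choose_eq_zero_of_lt (by omega)]
    ring

lemma main_nat (j k : ℕ) (hj : 1 ≤ j) (hjk : 4 * j ≤ k) :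
    4 * (∑ u ∈ range j, g j k u) ≤ Nat.choose (2 * k) k := by
  rw [← g_sum j k hjk]
  have hsplit : (4 * j + 1) = j + (j + (j + (j + 1))) := by omega
  rw [hsplit, Finset.sum_range_add, Finset.sum_range_add, Finset.sum_range_add]
  set S := ∑ u ∈ range j, g j k u with hS
  have hB : S ≤ ∑ x ∈ range j, g j k (j + x) := by
    apply Finset.sum_le_sum
    intro i hi
    simp only [Finset.mem_range] at hi
    exact g_mono j k hjk (j + i) i (by omega) (by omega)
  have hC : S ≤ ∑ x ∈ range j, g j k (j + (j + x)) := by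
    apply Finset.sum_le_sum
    intro i hi
    simp only [Finset.mem_range] at hi
    have e : g j k (j + (j + i)) = g j k (2 * j - i) := by
      have h1 : j + (j + i) = 4 * j - (2 * j - i) := by omega
      rw [h1]
      exact g_symm j k hjk (by omega)
    rw [e]
    exact g_mono j k hjk (2 * j - i) i (by omega) (by omega)
  have hD : S ≤ ∑ x ∈ range (j + 1), g j k (j + (j + (j + x))) := by
    rw [Finset.sum_range_succ']
    have e : ∀ i ∈ range j, g j k (j + (j + (j + (i + 1)))) = g j k (j - 1 - i) := by
      intro i hi
      simp only [Finset.mem_range] at hi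
      have h1 : j + (j + (j + (i + 1))) = 4 * j - (j - 1 - i) := by omega
      rw [h1]
      exact g_symm j k hjk (by omega)
    rw [Finset.sum_congr rfl e, Finset.sum_range_reflect]
    exact Nat.le_add_right _ _
  omega

end FewHalvesAux

/-- For every integer `j ≥ 1`, with `k = 400·j²`,
`Σ_{u=0}^{j-1} C(4j, u)·C(2k - 4j, k - u) ≤ (1/4)·C(2k, k)`. -/
theorem few_halves_probability_le_quarter (j : ℕ) (hj : 1 ≤ j) :
    (∑ u ∈ Finset.range j,
        (Nat.choose (4 * j) u : ℝ) * (Nat.choose (2 * (400 * j ^ 2) - 4 * j) (400 * j ^ 2 - u) : ℝ))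
      ≤ (1 / 4) * (Nat.choose (2 * (400 * j ^ 2)) (400 * j ^ 2) : ℝ) := by
  have hjk : 4 * j ≤ 400 * j ^ 2 := by nlinarith
  have h := FewHalvesAux.main_nat j (400 * j ^ 2) hj hjk
  have hcast : (4 * (∑ u ∈ Finset.range j, FewHalvesAux.g j (400 * j ^ 2) u) : ℝ)
      ≤ (Nat.choose (2 * (400 * j ^ 2)) (400 * j ^ 2) : ℝ) := by exact_mod_cast h
  unfold FewHalvesAux.g at hcast
  push_cast at hcast
  linarith
end

section
/- For every integer j ≥ 1, with k = 400·j², one has Σ_{u = k/2 − 2j + 1}^{k/2 + 2j − 1} binom(k, u)² < 0.3 · binom(2k, k). -/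
open Finset

lemma cwp_choose_ratio (m : ℕ) (hm : 0 < m) :
    ∀ i ≤ m, ((m:ℝ) - i*(i+1)) * ((2*m).choose m) ≤ (m:ℝ) * ((2*m).choose (m-i)) := by
  intro i
  induction i with
  | zero => intro _; simp
  | succ i ih =>
    intro hi
    have hi' : i ≤ m := by omega
    have IH := ih hi'
    have hrec : (2*m).choose (m-i) * (m-i) = (2*m).choose (m-(i+1)) * (m+i+1) := by
      have h := Nat.choose_succ_right_eq (2*m) (m-(i+1))
      have h1 : m-(i+1)+1 = m-i := by omega
      have h2 : 2*m - (m-(i+1)) = m+i+1 := by omega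
      rw [h1, h2] at h
      exact h
    have hrecR : ((2*m).choose (m-i) : ℝ) * ((m:ℝ)-i)
        = ((2*m).choose (m-(i+1)) : ℝ) * ((m:ℝ)+i+1) := by
      have := congrArg (fun x : ℕ => (x:ℝ)) hrec
      push_cast at this
      rw [Nat.cast_sub hi'] at this
      linarith [this]
    have hC0 : (0:ℝ) ≤ ((2*m).choose m : ℝ) := by positivity
    have hB0 : (0:ℝ) ≤ ((2*m).choose (m-(i+1)) : ℝ) := by positivity
    have hmi : (0:ℝ) ≤ (m:ℝ) - i := by
      have : (i:ℝ) ≤ m := by exact_mod_cast hi'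
      linarith
    have hpos : (0:ℝ) < (m:ℝ)+i+1 := by positivity
    have step1 : ((m:ℝ) - i*(i+1)) * ((2*m).choose m) * ((m:ℝ)-i)
        ≤ (m:ℝ) * (((2*m).choose (m-(i+1)) : ℝ) * ((m:ℝ)+i+1)) := by
      calc ((m:ℝ) - i*(i+1)) * ((2*m).choose m) * ((m:ℝ)-i)
          ≤ (m:ℝ) * ((2*m).choose (m-i)) * ((m:ℝ)-i) := by nlinarith
        _ = (m:ℝ) * (((2*m).choose (m-(i+1)) : ℝ) * ((m:ℝ)+i+1)) := by rw [mul_assoc, hrecR]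
    have key : ((m:ℝ) - (i+1)*((i+1)+1)) * ((m:ℝ)+i+1) ≤ ((m:ℝ) - i*(i+1)) * ((m:ℝ)-i) := by
      nlinarith [sq_nonneg ((i:ℝ)), (Nat.cast_nonneg i : (0:ℝ) ≤ i),
        (Nat.cast_pos (α := ℝ)).mpr hm]
    have hkey := mul_le_mul_of_nonneg_right key hC0
    rw [← mul_le_mul_iff_of_pos_right hpos]
    push_cast at hkey step1 ⊢
    nlinarith [step1, hkey]

lemma cwp_sum_Icc_sym (f : ℕ → ℝ) (m : ℕ) : ∀ N, N ≤ m →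
    ∑ u ∈ Finset.Icc (m-N) (m+N), f u
    = f m + ∑ i ∈ Finset.Icc 1 N, (f (m-i) + f (m+i)) := by
  intro N
  induction N with
  | zero => intro _; simp
  | succ N ih =>
    intro h
    have hset : Finset.Icc (m-(N+1)) (m+(N+1))
        = insert (m-(N+1)) (insert (m+(N+1)) (Finset.Icc (m-N) (m+N))) := by
      ext x; simp only [Finset.mem_Icc, Finset.mem_insert]; omega
    rw [hset, Finset.sum_insert (by simp only [Finset.mem_insert, Finset.mem_Icc]; omega),
        Finset.sum_insert (by simp only [Finset.mem_Icc]; omega), ih (by omega),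
        Finset.sum_Icc_succ_top (by omega : 1 ≤ N+1)]
    ring

lemma cwp_sum_closed (m : ℝ) : ∀ N : ℕ,
    ∑ i ∈ Finset.Icc 1 N, (m - (i:ℝ)*((i:ℝ)+1))^2
    = N*m^2 - 2*m*((N:ℝ)*(N+1)*(N+2)/3)
      + (N:ℝ)*(N+1)*(N+2)*(3*(N:ℝ)^2+6*N+1)/15 := by
  intro N
  induction N with
  | zero => simp
  | succ N ih =>
    rw [Finset.sum_Icc_succ_top (by omega : 1 ≤ N+1), ih]
    push_cast
    ring

lemma cwp_vandermonde_sq (k : ℕ) :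
    ∑ i ∈ range (k+1), (k.choose i)^2 = (2*k).choose k := by
  rw [two_mul, Nat.add_choose_eq, Finset.Nat.sum_antidiagonal_eq_sum_range_succ_mk]
  apply Finset.sum_congr rfl
  intro i hi
  simp only [mem_range] at hi
  rw [Nat.choose_symm (by omega), sq]


lemma cwp_poly (x S M : ℝ) (hx : 1 ≤ x) (hM : M = 200*x^2)
    (hS : S = 13*x*M^2 - 2*M*(13*x*(13*x+1)*(13*x+2)/3)
      + 13*x*(13*x+1)*(13*x+2)*(3*(13*x)^2+6*(13*x)+1)/15) :
    (4*x - 1) * M^2 < 0.3 * (M^2 + 2*S) := by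
  subst hM hS
  have h1 := lt_of_lt_of_le zero_lt_one hx
  nlinarith [pow_pos h1 2, pow_pos h1 3, pow_pos h1 4, pow_pos h1 5, hx]

/-- For every integer `j ≥ 1`, with `k = 400·j²` (so `k/2 = 200·j²` and `√k/10 = 2j`),
`Σ_{u = k/2 - 2j + 1}^{k/2 + 2j - 1} C(k, u)² < 0.3·C(2k, k)`. -/
theorem central_window_probability_lt (j : ℕ) (hj : 1 ≤ j) :
    (∑ u ∈ Finset.Icc (200 * j ^ 2 - 2 * j + 1) (200 * j ^ 2 + 2 * j - 1),
        (Nat.choose (400 * j ^ 2) u : ℝ) ^ 2)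
      < 0.3 * (Nat.choose (2 * (400 * j ^ 2)) (400 * j ^ 2) : ℝ) := by
  have hj2 : j ≤ j ^ 2 := by nlinarith
  set k := 400 * j ^ 2 with hk
  set m := 200 * j ^ 2 with hm
  set N := 13 * j with hN
  have hk2m : k = 2 * m := by rw [hk, hm]; ring
  have hmpos : 0 < m := by positivity
  have hNm : N ≤ m := by rw [hN, hm]; nlinarith
  have hNsq : N * (N + 1) ≤ m := by rw [hN, hm]; nlinarith
  have hmk : m ≤ k := by omega
  have hmid : k / 2 = m := by omega
  set Cm : ℝ := ((k.choose m : ℕ) : ℝ) with hCm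
  have hCmpos : 0 < Cm := by
    rw [hCm]
    exact_mod_cast Nat.choose_pos hmk
  -- Step A: window sum ≤ (4j-1) * Cm^2
  have hcard : (Finset.Icc (m - 2*j + 1) (m + 2*j - 1)).card = 4*j - 1 := by
    rw [Nat.card_Icc]; omega
  have stepA : (∑ u ∈ Finset.Icc (m - 2*j + 1) (m + 2*j - 1), (Nat.choose k u : ℝ) ^ 2)
      ≤ (4*(j:ℝ) - 1) * Cm^2 := by
    have hle := Finset.sum_le_card_nsmul (Finset.Icc (m - 2*j + 1) (m + 2*j - 1))
      (fun u => (Nat.choose k u : ℝ) ^ 2) (Cm^2) ?_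
    · rw [hcard] at hle
      have hco : ((4*j-1 : ℕ) : ℝ) = 4*(j:ℝ) - 1 := by
        have h4 : 1 ≤ 4*j := by omega
        push_cast [Nat.cast_sub h4]
        ring
      rwa [nsmul_eq_mul, hco] at hle
    · intro u _
      have h1 : k.choose u ≤ k.choose m := by
        rw [← hmid]; exact Nat.choose_le_middle u k
      have h1' : (k.choose u : ℝ) ≤ Cm := by rw [hCm]; exact_mod_cast h1
      have h0 : (0:ℝ) ≤ (k.choose u : ℝ) := by positivity
      exact pow_le_pow_left₀ h0 h1' 2
  -- termwise ratio lower bound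
  have ratio : ∀ i ≤ N, ((m:ℝ) - i*(i+1))^2 * Cm^2 ≤ (m:ℝ)^2 * ((k.choose (m-i) : ℝ))^2 := by
    intro i hi
    have him : i ≤ m := le_trans hi hNm
    have hr := cwp_choose_ratio m hmpos i him
    rw [← hk2m] at hr
    have ha : (0:ℝ) ≤ (m:ℝ) - i*(i+1) := by
      have h2 : (i*(i+1) : ℕ) ≤ m :=
        le_trans (Nat.mul_le_mul hi (by omega)) hNsq
      have h3 := (Nat.cast_le (α := ℝ)).mpr h2
      push_cast at h3
      linarith
    have hb : (0:ℝ) ≤ Cm := le_of_lt hCmpos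
    nlinarith [mul_nonneg ha hb, hr]
  -- symmetry
  have hsym : ∀ i ≤ N, (k.choose (m+i) : ℝ) = (k.choose (m-i) : ℝ) := by
    intro i hi
    congr 1
    have h1 : m + i ≤ k := by omega
    have h2 : k - (m+i) = m - i := by omega
    rw [← Nat.choose_symm h1, h2]
  -- wide window decomposition
  have hdecomp := cwp_sum_Icc_sym (fun u => (k.choose u : ℝ)^2) m N hNm
  -- total dominates wide window
  have htot : (∑ u ∈ Finset.Icc (m-N) (m+N), (k.choose u : ℝ)^2)
      ≤ ((2*k).choose k : ℝ) := by
    rw [← cwp_vandermonde_sq k]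
    have hsub : Finset.Icc (m-N) (m+N) ⊆ Finset.range (k+1) := by
      intro x hx
      simp only [Finset.mem_Icc] at hx
      simp only [Finset.mem_range]
      omega
    calc (∑ u ∈ Finset.Icc (m-N) (m+N), (k.choose u : ℝ)^2)
        = ((∑ u ∈ Finset.Icc (m-N) (m+N), (k.choose u)^2 : ℕ) : ℝ) := by push_cast; rfl
      _ ≤ ((∑ i ∈ Finset.range (k+1), (k.choose i)^2 : ℕ) : ℝ) := by
          exact_mod_cast Finset.sum_le_sum_of_subset hsub
  -- combine: m^2 * total ≥ m^2*Cm^2 + 2 * (Σ (m - i(i+1))^2) * Cm^2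
  have hwide : (m:ℝ)^2 * Cm^2
        + 2 * (∑ i ∈ Finset.Icc 1 N, ((m:ℝ) - (i:ℝ)*((i:ℝ)+1))^2) * Cm^2
      ≤ (m:ℝ)^2 * (∑ u ∈ Finset.Icc (m-N) (m+N), (k.choose u : ℝ)^2) := by
    have hterm : ∀ i ∈ Finset.Icc 1 N,
        2 * ((m:ℝ) - (i:ℝ)*((i:ℝ)+1))^2 * Cm^2
        ≤ (m:ℝ)^2 * (((k.choose (m-i) : ℝ))^2 + ((k.choose (m+i) : ℝ))^2) := by
      intro i hi
      simp only [Finset.mem_Icc] at hi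
      rw [hsym i hi.2]
      have h5 := ratio i hi.2
      nlinarith
    have hsum := Finset.sum_le_sum hterm
    calc (m:ℝ)^2 * Cm^2 + 2 * (∑ i ∈ Finset.Icc 1 N, ((m:ℝ) - (i:ℝ)*((i:ℝ)+1))^2) * Cm^2
        = (m:ℝ)^2 * Cm^2
            + ∑ i ∈ Finset.Icc 1 N, 2 * ((m:ℝ) - (i:ℝ)*((i:ℝ)+1))^2 * Cm^2 := by
          rw [Finset.mul_sum, Finset.sum_mul]
      _ ≤ (m:ℝ)^2 * Cm^2 + ∑ i ∈ Finset.Icc 1 N,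
            (m:ℝ)^2 * (((k.choose (m-i) : ℝ))^2 + ((k.choose (m+i) : ℝ))^2) := by
          linarith
      _ = (m:ℝ)^2 * ((k.choose m : ℝ)^2 + ∑ i ∈ Finset.Icc 1 N,
            (((k.choose (m-i) : ℝ))^2 + ((k.choose (m+i) : ℝ))^2)) := by
          rw [mul_add, Finset.mul_sum, hCm]
      _ = (m:ℝ)^2 * (∑ u ∈ Finset.Icc (m-N) (m+N), (k.choose u : ℝ)^2) := by
          rw [hdecomp]
  -- the numeric polynomial inequality
  have hjR : (1:ℝ) ≤ (j:ℝ) := by exact_mod_cast hj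
  have hmR : (m:ℝ) = 200*(j:ℝ)^2 := by rw [hm]; push_cast; ring
  have hNR : (N:ℝ) = 13*(j:ℝ) := by rw [hN]; push_cast; ring
  have hS := cwp_sum_closed (m:ℝ) N
  rw [hNR] at hS
  have hnum : (4*(j:ℝ) - 1) * (m:ℝ)^2
      < 0.3 * ((m:ℝ)^2 + 2 * (∑ i ∈ Finset.Icc 1 N, ((m:ℝ) - (i:ℝ)*((i:ℝ)+1))^2)) :=
    cwp_poly (j:ℝ) _ (m:ℝ) hjR hmR (by rw [hS])
  -- put everything together
  have hm2pos : (0:ℝ) < (m:ℝ)^2 := by positivity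
  have main : (m:ℝ)^2 * (∑ u ∈ Finset.Icc (m - 2*j + 1) (m + 2*j - 1), (Nat.choose k u : ℝ) ^ 2)
      < (m:ℝ)^2 * (0.3 * ((2*k).choose k : ℝ)) := by
    calc (m:ℝ)^2 * (∑ u ∈ Finset.Icc (m - 2*j + 1) (m + 2*j - 1), (Nat.choose k u : ℝ) ^ 2)
        ≤ (m:ℝ)^2 * ((4*(j:ℝ) - 1) * Cm^2) :=
          mul_le_mul_of_nonneg_left stepA (le_of_lt hm2pos)
      _ = ((4*(j:ℝ) - 1) * (m:ℝ)^2) * Cm^2 := by ring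
      _ < (0.3 * ((m:ℝ)^2 + 2 * (∑ i ∈ Finset.Icc 1 N, ((m:ℝ) - (i:ℝ)*((i:ℝ)+1))^2))) * Cm^2 := by
          exact mul_lt_mul_of_pos_right hnum (by positivity)
      _ = 0.3 * ((m:ℝ)^2 * Cm^2
            + 2 * (∑ i ∈ Finset.Icc 1 N, ((m:ℝ) - (i:ℝ)*((i:ℝ)+1))^2) * Cm^2) := by ring
      _ ≤ 0.3 * ((m:ℝ)^2 * (∑ u ∈ Finset.Icc (m-N) (m+N), (k.choose u : ℝ)^2)) := by
          linarith
      _ ≤ 0.3 * ((m:ℝ)^2 * ((2*k).choose k : ℝ)) := by nlinarith [htot, hm2pos]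
      _ = (m:ℝ)^2 * (0.3 * ((2*k).choose k : ℝ)) := by ring
  exact (mul_lt_mul_iff_right₀ hm2pos).mp main
end

section
/- For every integer j ≥ 1, let k = 400·j² and s = 4j (so s = √k/5). Then for all natural numbers a and b with b ≤ s and a ≤ k/2 − 2j, one has binom(k, a) · binom(k − s, k − a − b) ≤ binom(k − s, a) · binom(k, k − a − b). -/
/-- The ratio `C(n,m)/C(n',m)` is increasing in `m` for `n' ≤ n`. -/
lemma choose_ratio_mono (n' n m1 m2 : ℕ) (hn : n' ≤ n) (h12 : m1 ≤ m2) (h2 : m2 ≤ n') :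
    n.choose m1 * n'.choose m2 ≤ n'.choose m1 * n.choose m2 := by
  have hpos : 0 < m2.choose m1 := Nat.choose_pos h12
  apply Nat.le_of_mul_le_mul_right _ hpos
  have e1 : n.choose m2 * m2.choose m1 = n.choose m1 * (n - m1).choose (m2 - m1) :=
    Nat.choose_mul h12
  have e2 : n'.choose m2 * m2.choose m1 = n'.choose m1 * (n' - m1).choose (m2 - m1) :=
    Nat.choose_mul h12
  calc n.choose m1 * n'.choose m2 * m2.choose m1
      = n.choose m1 * (n'.choose m2 * m2.choose m1) := by ring
    _ = n.choose m1 * (n'.choose m1 * (n' - m1).choose (m2 - m1)) := by rw [e2]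
    _ ≤ n.choose m1 * (n'.choose m1 * (n - m1).choose (m2 - m1)) := by
        apply Nat.mul_le_mul_left
        apply Nat.mul_le_mul_left
        exact Nat.choose_le_choose _ (Nat.sub_le_sub_right hn m1)
    _ = n'.choose m1 * (n.choose m1 * (n - m1).choose (m2 - m1)) := by ring
    _ = n'.choose m1 * (n.choose m2 * m2.choose m1) := by rw [e1]
    _ = n'.choose m1 * n.choose m2 * m2.choose m1 := by ring

/-- For every integer `j ≥ 1`, with `k = 400·j²` and `s = 4j = √k/5`, for all naturals
`a, b` with `b ≤ s` and `a ≤ k/2 - 2j`,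
`C(k, a)·C(k - s, k - a - b) ≤ C(k - s, a)·C(k, k - a - b)`. -/
theorem case_probability_comparison (j : ℕ) (hj : 1 ≤ j) (a b : ℕ)
    (hb : b ≤ 4 * j) (ha : a ≤ 200 * j ^ 2 - 2 * j) :
    Nat.choose (400 * j ^ 2) a * Nat.choose (400 * j ^ 2 - 4 * j) (400 * j ^ 2 - a - b)
      ≤ Nat.choose (400 * j ^ 2 - 4 * j) a * Nat.choose (400 * j ^ 2) (400 * j ^ 2 - a - b) := by
  have hJ : j ≤ j ^ 2 := by nlinarith
  by_cases hab : a + b < 4 * j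
  · have h0 : (400 * j ^ 2 - 4 * j) < (400 * j ^ 2 - a - b) := by omega
    rw [Nat.choose_eq_zero_of_lt h0]
    simp
  · push_neg at hab
    apply choose_ratio_mono
    · omega
    · omega
    · omega
end

section
/- Let μ be the measure on ℝ equal to the measure with density x ↦ 1/(e·x²) with respect to Lebesgue measure restricted to the interval [1/e, 1), plus (1/e) times the Dirac measure at 1. Then: (i) μ is a probability measure; (ii) ∫ x dμ(x) = 2/e; (iii) for every p ∈ [0,1], p · μ({x : x ≥ p}) ≤ 1/e. Consequently, for every posted price p ∈ [0,1], the seller's regret ∫ x dμ(x) − p · μ({x : x ≥ p}) against a single buyer whose value is distributed according to μ is at least 1/e, so no pricing algorithm achieves regret strictly less than 1/e in the revenue-maximization problem. -/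
open MeasureTheory
open scoped NNReal ENNReal

lemma buyer_intInt {p : ℝ} (hp : 0 < p) (hp1 : p ≤ 1) :
    ∫ x in Set.Ico p 1, 1 / (Real.exp 1 * x ^ 2) = (Real.exp 1)⁻¹ * (p⁻¹ - 1) := by
  have h0 : (0:ℝ) ∉ Set.uIcc p 1 := Set.notMem_uIcc_of_lt hp one_pos
  rw [MeasureTheory.integral_Ico_eq_integral_Ioo, ← MeasureTheory.integral_Ioc_eq_integral_Ioo,
    ← intervalIntegral.integral_of_le hp1]
  have he : ∀ x : ℝ, 1/(Real.exp 1 * x^2) = (Real.exp 1)⁻¹ * x ^ (-2 : ℤ) := by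
    intro x
    rw [zpow_neg, one_div, mul_inv]
    norm_num [zpow_ofNat]
  simp_rw [he]
  rw [intervalIntegral.integral_const_mul,
    integral_zpow (Or.inr ⟨by norm_num, h0⟩)]
  norm_num [zpow_neg_one]
  ring

lemma buyer_lintInt {p : ℝ} (hp : 0 < p) (hp1 : p ≤ 1) :
    ∫⁻ x in Set.Ico p 1, ENNReal.ofReal (1 / (Real.exp 1 * x ^ 2)) ∂volume
      = ENNReal.ofReal ((Real.exp 1)⁻¹ * (p⁻¹ - 1)) := by
  have hcont : ContinuousOn (fun x : ℝ => 1 / (Real.exp 1 * x ^ 2)) (Set.Icc p 1) := by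
    apply continuousOn_const.div (by fun_prop)
    intro x hx
    have : 0 < x := lt_of_lt_of_le hp hx.1
    positivity
  have hint : IntegrableOn (fun x : ℝ => 1 / (Real.exp 1 * x ^ 2)) (Set.Ico p 1) volume :=
    (hcont.integrableOn_Icc).mono_set Set.Ico_subset_Icc_self
  rw [← MeasureTheory.ofReal_integral_eq_lintegral_ofReal hint
      (Filter.Eventually.of_forall fun x => by positivity), buyer_intInt hp hp1]

/-- The hard buyer-value distribution: density `x ↦ 1/(e·x²)` with respect to Lebesgue
measure restricted to `[1/e, 1)`, plus an atom of mass `1/e` at `1`. -/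
noncomputable def buyerMeasure : Measure ℝ :=
  (volume.restrict (Set.Ico (Real.exp 1)⁻¹ 1)).withDensity
      (fun x => ENNReal.ofReal (1 / (Real.exp 1 * x ^ 2)))
    + (ENNReal.ofReal (Real.exp 1)⁻¹) • Measure.dirac 1

lemma exp_inv_pos : 0 < (Real.exp 1)⁻¹ := by positivity
lemma exp_inv_lt_one : (Real.exp 1)⁻¹ < 1 := by
  have := Real.add_one_lt_exp (one_ne_zero (α := ℝ))
  rw [inv_lt_one₀ (Real.exp_pos 1)]
  linarith

lemma buyer_apply_Ici {p : ℝ} (hp : (Real.exp 1)⁻¹ ≤ p) (hp1 : p ≤ 1) :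
    buyerMeasure (Set.Ici p) = ENNReal.ofReal ((Real.exp 1 * p)⁻¹) := by
  have hp0 : 0 < p := lt_of_lt_of_le exp_inv_pos hp
  have hE : 0 < Real.exp 1 := Real.exp_pos 1
  rw [buyerMeasure, Measure.add_apply, withDensity_apply _ measurableSet_Ici,
    Measure.restrict_restrict measurableSet_Ici]
  have hset : Set.Ici p ∩ Set.Ico (Real.exp 1)⁻¹ 1 = Set.Ico p 1 := by
    ext x
    simp only [Set.mem_inter_iff, Set.mem_Ici, Set.mem_Ico]
    constructor
    · rintro ⟨h1, _, h3⟩; exact ⟨h1, h3⟩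
    · rintro ⟨h1, h2⟩; exact ⟨h1, le_trans hp h1, h2⟩
  rw [hset, buyer_lintInt hp0 hp1, Measure.smul_apply, Measure.dirac_apply' _ measurableSet_Ici]
  have h1 : (1:ℝ) ∈ Set.Ici p := hp1
  rw [Set.indicator_of_mem h1]
  simp only [Pi.one_apply, smul_eq_mul, mul_one]
  rw [← ENNReal.ofReal_add (mul_nonneg exp_inv_pos.le (sub_nonneg.2 ((one_le_inv₀ hp0).2 hp1))) (le_of_lt exp_inv_pos)]
  congr 1
  field_simp
  ring

lemma buyer_univ : buyerMeasure Set.univ = 1 := by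
  rw [buyerMeasure, Measure.add_apply, withDensity_apply _ MeasurableSet.univ,
    Measure.restrict_univ]
  have : ∫⁻ x, ENNReal.ofReal (1 / (Real.exp 1 * x ^ 2))
        ∂(volume.restrict (Set.Ico (Real.exp 1)⁻¹ 1))
      = ENNReal.ofReal ((Real.exp 1)⁻¹ * (((Real.exp 1)⁻¹)⁻¹ - 1)) :=
    buyer_lintInt exp_inv_pos (le_of_lt exp_inv_lt_one)
  rw [this, Measure.smul_apply, Measure.dirac_apply' _ MeasurableSet.univ,
    Set.indicator_of_mem (Set.mem_univ 1)]
  simp only [Pi.one_apply, smul_eq_mul, mul_one, inv_inv]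
  rw [← ENNReal.ofReal_add (mul_nonneg exp_inv_pos.le (sub_nonneg.2 (Real.one_le_exp one_pos.le))) (le_of_lt exp_inv_pos)]
  have hE : 0 < Real.exp 1 := Real.exp_pos 1
  have : (Real.exp 1)⁻¹ * (Real.exp 1 - 1) + (Real.exp 1)⁻¹ = 1 := by
    field_simp
    ring
  rw [this, ENNReal.ofReal_one]

lemma buyer_gmeas : Measurable (fun x : ℝ => Real.toNNReal (1 / (Real.exp 1 * x ^ 2))) := by
  fun_prop

lemma buyer_mean : ∫ x, x ∂buyerMeasure = 2 / Real.exp 1 := by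
  have hE : 0 < Real.exp 1 := Real.exp_pos 1
  have hdens : (fun x : ℝ => ENNReal.ofReal (1 / (Real.exp 1 * x ^ 2)))
      = fun x => ((Real.toNNReal (1 / (Real.exp 1 * x ^ 2)) : ℝ≥0) : ℝ≥0∞) := rfl
  have hcont : ContinuousOn (fun x : ℝ => 1 / (Real.exp 1 * x ^ 2) * x)
      (Set.Icc (Real.exp 1)⁻¹ 1) := by
    apply ContinuousOn.mul _ continuousOn_id
    apply continuousOn_const.div (by fun_prop)
    intro x hx
    have : 0 < x := lt_of_lt_of_le exp_inv_pos hx.1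
    positivity
  have heq : Set.EqOn (fun x : ℝ => 1 / (Real.exp 1 * x ^ 2) * x)
      (fun x : ℝ => Real.toNNReal (1 / (Real.exp 1 * x ^ 2)) • x)
      (Set.Ico (Real.exp 1)⁻¹ 1) := by
    intro x hx
    have hx0 : 0 < x := lt_of_lt_of_le exp_inv_pos hx.1
    simp only [NNReal.smul_def, smul_eq_mul,
      Real.coe_toNNReal _ (by positivity : (0:ℝ) ≤ 1 / (Real.exp 1 * x ^ 2))]
  have h_smul_int : Integrable
      (fun x : ℝ => Real.toNNReal (1 / (Real.exp 1 * x ^ 2)) • x)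
      (volume.restrict (Set.Ico (Real.exp 1)⁻¹ 1)) := by
    refine IntegrableOn.congr_fun ?_ heq measurableSet_Ico
    exact (hcont.integrableOn_Icc).mono_set Set.Ico_subset_Icc_self
  have hν_int : Integrable (fun x : ℝ => x)
      ((volume.restrict (Set.Ico (Real.exp 1)⁻¹ 1)).withDensity
        (fun x => ENNReal.ofReal (1 / (Real.exp 1 * x ^ 2)))) := by
    rw [hdens]
    exact (integrable_withDensity_iff_integrable_smul buyer_gmeas).2 h_smul_int
  have hδ_int : Integrable (fun x : ℝ => x)
      ((ENNReal.ofReal (Real.exp 1)⁻¹) • Measure.dirac 1) := by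
    refine Integrable.smul_measure ?_ ENNReal.ofReal_ne_top
    refine ⟨measurable_id.aestronglyMeasurable, ?_⟩
    simp [HasFiniteIntegral, lintegral_dirac]
  rw [buyerMeasure, integral_add_measure hν_int hδ_int, hdens,
    integral_withDensity_eq_integral_smul buyer_gmeas, integral_smul_measure,
    integral_dirac, ENNReal.toReal_ofReal exp_inv_pos.le]
  have h1 : ∫ x in Set.Ico (Real.exp 1)⁻¹ 1,
      Real.toNNReal (1 / (Real.exp 1 * x ^ 2)) • x
      = ∫ x in Set.Ico (Real.exp 1)⁻¹ 1, (Real.exp 1)⁻¹ * (1 / x) := by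
    refine setIntegral_congr_fun measurableSet_Ico fun x hx => ?_
    have hx0 : 0 < x := lt_of_lt_of_le exp_inv_pos hx.1
    rw [NNReal.smul_def, smul_eq_mul,
      Real.coe_toNNReal _ (by positivity : (0:ℝ) ≤ 1 / (Real.exp 1 * x ^ 2))]
    field_simp
  rw [h1, MeasureTheory.integral_const_mul,
    MeasureTheory.integral_Ico_eq_integral_Ioo, ← MeasureTheory.integral_Ioc_eq_integral_Ioo,
    ← intervalIntegral.integral_of_le exp_inv_lt_one.le,
    integral_one_div (Set.notMem_uIcc_of_lt exp_inv_pos one_pos)]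
  rw [one_div, inv_inv, Real.log_exp]
  field_simp
  rw [smul_eq_mul, mul_one, mul_one_div_cancel hE.ne']
  ring

/-- The measure `buyerMeasure` is a probability measure; its mean is `2/e`; for every
posted price `p ∈ [0,1]` the expected revenue `p·μ{x : x ≥ p}` is at most `1/e`; and
consequently the seller's regret `∫ x dμ - p·μ{x : x ≥ p}` is at least `1/e` for every
price `p ∈ [0,1]`. -/
theorem revenue_regret_lower_bound :
    IsProbabilityMeasure buyerMeasure
    ∧ (∫ x, x ∂buyerMeasure) = 2 / Real.exp 1
    ∧ (∀ p ∈ Set.Icc (0 : ℝ) 1,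
        p * (buyerMeasure {x : ℝ | p ≤ x}).toReal ≤ 1 / Real.exp 1)
    ∧ (∀ p ∈ Set.Icc (0 : ℝ) 1,
        1 / Real.exp 1 ≤ (∫ x, x ∂buyerMeasure) - p * (buyerMeasure {x : ℝ | p ≤ x}).toReal) := by
  have hE : 0 < Real.exp 1 := Real.exp_pos 1
  have hprob : IsProbabilityMeasure buyerMeasure := ⟨buyer_univ⟩
  have hrev : ∀ p ∈ Set.Icc (0:ℝ) 1,
      p * (buyerMeasure {x : ℝ | p ≤ x}).toReal ≤ 1 / Real.exp 1 := by
    intro p hp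
    obtain ⟨hp0, hp1⟩ := hp
    rcases le_or_gt p (Real.exp 1)⁻¹ with h | h
    · haveI := hprob
      have hμ : buyerMeasure {x : ℝ | p ≤ x} ≤ 1 := prob_le_one
      have htr : (buyerMeasure {x : ℝ | p ≤ x}).toReal ≤ 1 := by
        simpa using ENNReal.toReal_mono ENNReal.one_ne_top hμ
      calc p * (buyerMeasure {x : ℝ | p ≤ x}).toReal ≤ p * 1 :=
            mul_le_mul_of_nonneg_left htr hp0
        _ = p := mul_one p
        _ ≤ 1 / Real.exp 1 := by rw [one_div]; exact h
    · have hp0' : 0 < p := lt_trans exp_inv_pos h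
      have hset : {x : ℝ | p ≤ x} = Set.Ici p := rfl
      rw [hset, buyer_apply_Ici h.le hp1, ENNReal.toReal_ofReal (by positivity)]
      apply le_of_eq
      field_simp
  refine ⟨hprob, buyer_mean, hrev, fun p hp => ?_⟩
  have h := hrev p hp
  rw [buyer_mean]
  have h2 : 2 / Real.exp 1 - 1 / Real.exp 1 = 1 / Real.exp 1 := by ring
  linarith
end
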